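/- arXiv:1310.1215 — 11 statements merged into one kernel-verified Lean document; each statement's English description precedes it below -/
import Mathlib

section
/- Let m ≥ 2 be an integer and let F(x) = x²/2 + x^{2m}/(2m). Then the period function T(A) = 2√2 ∫₀^A dx/√(F(A) − F(x)) of the potential system ẋ = −y, ẏ = x + x^{2m−1} is strictly decreasing on (0, ∞). -/
open Real Set intervalIntegral

/-- For `m ≥ 2` and the potential `F(x) = x²/2 + x^(2m)/(2m)`, the period function
`T(A) = 2√2 ∫₀^A dx/√(F(A) − F(x))` of `ẋ = −y, ẏ = x + x^(2m−1)` is strictly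
decreasing on `(0, ∞)`. -/
theorem period_function_strictAnti (m : ℕ) (hm : 2 ≤ m)
    (F T : ℝ → ℝ)
    (hF : ∀ x : ℝ, F x = x ^ 2 / 2 + x ^ (2 * m) / (2 * m))
    (hT : ∀ A : ℝ, T A = 2 * Real.sqrt 2 * ∫ x in (0:ℝ)..A, 1 / Real.sqrt (F A - F x)) :
    StrictAntiOn T (Set.Ioi (0 : ℝ)) := by
  have hkpos : 0 < 2 * m - 2 := by omega
  set k := 2 * m - 2 with hk
  set d : ℝ → ℝ → ℝ := fun A s => (1 - s ^ 2) / 2 + A ^ k * (1 - s ^ (2 * m)) / (2 * m)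
    with hd
  -- algebraic identity
  have hident : ∀ A s : ℝ, F A - F (A * s) = A ^ 2 * d A s := by
    intro A s
    have hpow : A ^ (2 * m) = A ^ k * A ^ 2 := by rw [← pow_add]; congr 1; omega
    simp only [hF, hd, mul_pow, hpow]
    ring
  -- rewriting T via substitution x = A * s
  have hTval : ∀ A : ℝ, 0 < A →
      T A = 2 * Real.sqrt 2 * ∫ s in (0:ℝ)..1, 1 / Real.sqrt (d A s) := by
    intro A hA
    rw [hT A]
    congr 1
    have h1 : (A • ∫ s in (0:ℝ)..1, 1 / Real.sqrt (F A - F (A * s)))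
        = ∫ x in (A*0:ℝ)..(A*1), 1 / Real.sqrt (F A - F x) :=
      intervalIntegral.smul_integral_comp_mul_left (fun x => 1 / Real.sqrt (F A - F x)) A
    rw [mul_zero, mul_one] at h1
    rw [← h1, smul_eq_mul, ← intervalIntegral.integral_const_mul]
    apply intervalIntegral.integral_congr
    intro s _
    show A * (1 / Real.sqrt (F A - F (A * s))) = 1 / Real.sqrt (d A s)
    rw [hident, Real.sqrt_mul (sq_nonneg A), Real.sqrt_sq hA.le, mul_one_div,
      show A / (A * Real.sqrt (d A s)) = (A * 1) / (A * Real.sqrt (d A s)) by ring,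
      mul_div_mul_left _ _ hA.ne']
  -- majorant
  have hH : IntervalIntegrable (fun s : ℝ => Real.sqrt 2 * (1 - s) ^ (-(1/2) : ℝ))
      MeasureTheory.volume 0 1 := by
    have h0 : IntervalIntegrable (fun x : ℝ => x ^ (-(1/2) : ℝ)) MeasureTheory.volume 0 1 :=
      intervalIntegrable_rpow' (by norm_num)
    have h1 := (h0.comp_sub_left 1).symm
    simpa using h1.const_mul (Real.sqrt 2)
  have hmeas : ∀ A : ℝ, MeasureTheory.AEStronglyMeasurable
      (fun s => 1 / Real.sqrt (d A s))
      (MeasureTheory.volume.restrict (Set.uIoc (0:ℝ) 1)) := by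
    intro A
    have hcont : Continuous (d A) := by simp only [hd]; continuity
    exact ((Real.continuous_sqrt.comp hcont).measurable.const_div 1).aestronglyMeasurable
  -- lower bound on d
  have hdnn : ∀ A : ℝ, 0 ≤ A → ∀ s ∈ Ioc (0:ℝ) 1, (1 - s)/2 ≤ d A s := by
    intro A hA s hs
    have hs0 : 0 ≤ s := hs.1.le
    have hs1 : s ≤ 1 := hs.2
    have h1 : (1 - s)/2 ≤ (1 - s^2)/2 := by nlinarith
    have hp : s ^ (2*m) ≤ 1 := pow_le_one₀ hs0 hs1
    have h2 : 0 ≤ A ^ k * (1 - s ^ (2*m)) / (2*m) := by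
      apply div_nonneg
      · exact mul_nonneg (pow_nonneg hA _) (by linarith)
      · positivity
    simp only [hd]; linarith
  -- pointwise bound by the majorant
  have hbound : ∀ A : ℝ, 0 ≤ A → ∀ s ∈ Ioc (0:ℝ) 1,
      1 / Real.sqrt (d A s) ≤ Real.sqrt 2 * (1 - s) ^ (-(1/2) : ℝ) := by
    intro A hA s hs
    have h1s : (0:ℝ) ≤ 1 - s := by linarith [hs.2]
    have hmaj : Real.sqrt 2 * (1 - s) ^ (-(1/2) : ℝ) = 1 / Real.sqrt ((1 - s)/2) := by
      rw [Real.rpow_neg h1s, ← Real.sqrt_eq_rpow, Real.sqrt_div h1s, one_div,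
        inv_div, div_eq_mul_inv]
    rw [hmaj]
    rcases eq_or_lt_of_le hs.2 with h | h
    · rw [show d A s = 0 by rw [h]; simp [hd], h]
      norm_num
    · have hpos : (0:ℝ) < (1 - s)/2 := by linarith
      exact one_div_le_one_div_of_le (Real.sqrt_pos.mpr hpos)
        (Real.sqrt_le_sqrt (hdnn A hA s hs))
  -- integrability
  have hgint : ∀ A : ℝ, 0 < A → IntervalIntegrable (fun s => 1 / Real.sqrt (d A s))
      MeasureTheory.volume 0 1 := by
    intro A hA
    refine hH.mono_fun (hmeas A) ?_
    filter_upwards [MeasureTheory.ae_restrict_mem measurableSet_uIoc] with s hs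
    rw [uIoc_of_le zero_le_one] at hs
    have h1s : (0:ℝ) ≤ 1 - s := by linarith [hs.2]
    rw [Real.norm_eq_abs, Real.norm_eq_abs, abs_of_nonneg (by positivity),
      abs_of_nonneg (by positivity)]
    exact hbound A hA.le s hs
  -- strict monotone comparison
  intro A₁ hA₁ A₂ hA₂ h12
  simp only [mem_Ioi] at hA₁ hA₂
  have key : ∀ s ∈ Ioo (0:ℝ) 1,
      0 < 1 / Real.sqrt (d A₁ s) - 1 / Real.sqrt (d A₂ s) := by
    intro s hs
    have hs0 : 0 < s := hs.1
    have hs1 : s < 1 := hs.2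
    have hd1pos : 0 < d A₁ s := by
      exact lt_of_lt_of_le (by linarith) (hdnn A₁ hA₁.le s ⟨hs0, hs1.le⟩)
    have hlt : d A₁ s < d A₂ s := by
      have hAk : A₁ ^ k < A₂ ^ k := pow_lt_pow_left₀ h12 hA₁.le (by omega)
      have hsp : s ^ (2*m) < 1 := pow_lt_one₀ hs0.le hs1 (by omega)
      have hfrac : 0 < (1 - s ^ (2*m)) / (2*m) := by
        apply div_pos (by linarith) (by positivity)
      simp only [hd, mul_div_assoc]
      have := mul_lt_mul_of_pos_right hAk hfrac
      linarith
    have hd2pos : 0 < d A₂ s := hd1pos.trans hlt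
    have : 1 / Real.sqrt (d A₂ s) < 1 / Real.sqrt (d A₁ s) :=
      one_div_lt_one_div_of_lt (Real.sqrt_pos.mpr hd1pos)
        (Real.sqrt_lt_sqrt hd1pos.le hlt)
    linarith
  have hI : (∫ s in (0:ℝ)..1, 1 / Real.sqrt (d A₂ s))
      < ∫ s in (0:ℝ)..1, 1 / Real.sqrt (d A₁ s) := by
    have hpos := intervalIntegral.intervalIntegral_pos_of_pos_on
      ((hgint A₁ hA₁).sub (hgint A₂ hA₂)) key one_pos
    rw [intervalIntegral.integral_sub (hgint A₁ hA₁) (hgint A₂ hA₂)] at hpos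
    linarith
  rw [hTval A₁ hA₁, hTval A₂ hA₂]
  have h2 : (0:ℝ) < 2 * Real.sqrt 2 := by positivity
  exact mul_lt_mul_of_pos_left hI h2
end

section
/- Let m ≥ 2 be an integer, let F(x) = x²/2 + x^{2m}/(2m), and let T(A) = 2√2 ∫₀^A dx/√(F(A) − F(x)). Set S(m) = (2m−1)(4m−1)!!/(m·(4m)!!) − (m−1)(2m−1)!!/(m·(2m)!!). Then, as A → 0⁺, T(A) = 2π(1 − ((2m−1)!!/(2m)!!) A^{2m−2} + S(m) A^{4m−4}) + O(A^{6m−6}); that is, there exist constants C > 0 and δ > 0 such that |T(A) − 2π(1 − ((2m−1)!!/(2m)!!) A^{2m−2} + S(m) A^{4m−4})| ≤ C A^{6m−6} for all 0 < A < δ. -/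
open Real Set Nat

lemma df_pos_real (n : ℕ) : (0:ℝ) < (n‼ : ℝ) := by exact_mod_cast Nat.doubleFactorial_pos n

lemma df_odd_real (n : ℕ) : ((2*n+1)‼ : ℝ) = (2*n+1) * ((2*n-1)‼ : ℝ) := by
  cases n with
  | zero => simp
  | succ k =>
    have h1 : 2*(k+1)+1 = (2*k+1)+2 := by omega
    have h2 : 2*(k+1)-1 = 2*k+1 := by omega
    rw [h1, h2, Nat.doubleFactorial_add_two]
    push_cast; ring

lemma df_even_real (n : ℕ) : ((2*n+2)‼ : ℝ) = (2*n+2) * ((2*n)‼ : ℝ) := by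
  have h1 : 2*n+2 = (2*n)+2 := by omega
  rw [h1, Nat.doubleFactorial_add_two]; push_cast; ring

/-- Wallis: ∫₀^{π/2} sin^{2n} = (π/2)·(2n−1)‼/(2n)‼ -/
lemma wallis (n : ℕ) : ∫ x in (0:ℝ)..(π/2), sin x ^ (2*n)
    = π/2 * ((2*n-1)‼ : ℝ) / ((2*n)‼ : ℝ) := by
  induction n with
  | zero => simp [integral_one]
  | succ k ih =>
    have h2 : 2*(k+1) = 2*k+2 := by omega
    rw [h2, integral_sin_pow]
    rw [Real.sin_zero, Real.cos_pi_div_two, ih]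
    have e1 : 2*k+2-1 = 2*k+1 := by omega
    rw [e1, df_odd_real k, df_even_real k]
    have p1 := df_pos_real (2*k)
    have p2 := df_pos_real (2*k-1)
    have : (0:ℝ) < (2*(k:ℝ)+2) := by positivity
    field_simp
    push_cast
    ring

noncomputable def wr (k : ℕ) : ℝ := ((2*k-1)‼ : ℝ) / ((2*k)‼ : ℝ)

/-- cc n = Σ_{k<n} wr k -/
noncomputable def cc : ℕ → ℝ
  | 0 => 0
  | n+1 => ((2*n+1)‼ : ℝ) / ((2*n)‼ : ℝ)

lemma sum_wr (n : ℕ) : ∑ k ∈ Finset.range n, wr k = cc n := by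
  induction n with
  | zero => simp [cc]
  | succ k ih =>
    rw [Finset.sum_range_succ, ih]
    cases k with
    | zero => simp [cc, wr]
    | succ j =>
      show ((2*j+1)‼:ℝ)/((2*j)‼:ℝ) + wr (j+1) = _
      show _ = ((2*(j+1)+1)‼:ℝ)/((2*(j+1))‼:ℝ)
      unfold wr
      have e1 : 2*(j+1)-1 = 2*j+1 := by omega
      have e2 : 2*(j+1) = 2*j+2 := by omega
      have e3 : 2*(j+1)+1 = 2*(j+1)+1 := rfl
      rw [e1, e2]
      have hodd : ((2*(j+1)+1)‼ : ℝ) = (2*((j:ℝ)+1)+1) * ((2*(j+1)-1)‼ : ℝ) := by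
        have := df_odd_real (j+1); push_cast at this ⊢; linarith [this]
      rw [e1] at hodd
      rw [show 2*(j+1) = 2*j+2 from rfl] at hodd
      rw [hodd, df_even_real j]
      have p1 := df_pos_real (2*j)
      have p2 := df_pos_real (2*j+1)
      field_simp

lemma sum_cc (n : ℕ) : ∑ k ∈ Finset.range (n+2), cc k = ((2*n+3)‼ : ℝ) / (3 * ((2*n)‼ : ℝ)) := by
  induction n with
  | zero =>
    simp [Finset.sum_range_succ, cc]
  | succ j ih =>
    rw [show j+1+2 = (j+2)+1 from rfl, Finset.sum_range_succ, ih]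
    show _ + ((2*(j+1)+1)‼:ℝ)/((2*(j+1))‼:ℝ) = _
    have hodd : ((2*(j+1)+3)‼ : ℝ) = (2*(j+1)+3) * ((2*(j+1)+1)‼ : ℝ) := by
      rw [show 2*(j+1)+3 = (2*(j+1)+1)+2 from rfl, Nat.doubleFactorial_add_two]
      push_cast; ring
    rw [show 2*(j+1)+1 = 2*j+3 from rfl] at *
    rw [show 2*(j+1)+3 = 2*j+5 from rfl] at *
    rw [show 2*(j+1) = 2*j+2 from rfl] at *
    rw [hodd, df_even_real j]
    have p1 := df_pos_real (2*j)
    have p2 := df_pos_real (2*j+3)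
    field_simp

lemma sum_wr_shift (k m : ℕ) : ∑ j ∈ Finset.range m, wr (k+j) = cc (k+m) - cc k := by
  have h := Finset.sum_range_add wr k m
  rw [sum_wr, sum_wr] at h
  linarith [h]

lemma Dval (q : ℕ) : ∑ k ∈ Finset.range (q+2), ∑ j ∈ Finset.range (q+2), wr (k+j)
    = ((4*q+7)‼ : ℝ)/(3*((4*q+4)‼ : ℝ)) - 2*(((2*q+3)‼ : ℝ)/(3*((2*q)‼ : ℝ))) := by
  have h1 : ∀ k, ∑ j ∈ Finset.range (q+2), wr (k+j) = cc (k+(q+2)) - cc k :=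
    fun k => sum_wr_shift k (q+2)
  simp only [h1, Finset.sum_sub_distrib]
  have h2 : ∑ k ∈ Finset.range (q+2), cc (k+(q+2))
      = ∑ k ∈ Finset.range (2*(q+2)), cc k - ∑ k ∈ Finset.range (q+2), cc k := by
    have := Finset.sum_range_add cc (q+2) (q+2)
    rw [show q+2+(q+2) = 2*(q+2) from by ring] at this
    have e : ∀ k, cc (q+2+k) = cc (k+(q+2)) := fun k => by rw [Nat.add_comm]
    simp only [e] at this
    linarith [this]
  rw [h2]
  have h3 : ∑ k ∈ Finset.range (2*(q+2)), cc k = ((2*(2*q+2)+3)‼ : ℝ)/(3*((2*(2*q+2))‼ : ℝ)) := by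
    rw [show 2*(q+2) = (2*q+2)+2 from by ring, sum_cc]
  have h4 : ∑ k ∈ Finset.range (q+2), cc k = ((2*q+3)‼ : ℝ)/(3*((2*q)‼ : ℝ)) := sum_cc q
  rw [h3, h4, show 2*(2*q+2)+3 = 4*q+7 from by ring, show 2*(2*q+2) = 4*q+4 from by ring]
  ring

lemma taylor_sqrt_bound (u : ℝ) (h0 : 0 ≤ u) (h1 : u ≤ 1/2) :
    |1/Real.sqrt (1+u) - (1 - u/2 + 3/8*u^2)| ≤ u^3 := by
  set y := 1/Real.sqrt (1+u) with hy
  set p : ℝ := 1 - u/2 + 3/8*u^2 with hp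
  have h1u : (0:ℝ) < 1 + u := by linarith
  have hs : Real.sqrt (1+u) > 0 := Real.sqrt_pos.mpr h1u
  have hypos : 0 < y := by rw [hy]; positivity
  have hy2 : y^2 = 1/(1+u) := by
    rw [hy, div_pow, one_pow, Real.sq_sqrt h1u.le]
  clear_value y p
  have e : y^2 - p^2 = -(u^3*(40 - 15*u + 9*u^2))/(64*(1+u)) := by
    rw [hy2, hp]; field_simp; ring
  have hnum : 0 ≤ u^3*(40 - 15*u + 9*u^2) :=
    mul_nonneg (pow_nonneg h0 3) (by nlinarith)
  have hb1 : y^2 - p^2 ≤ 3/4*u^3 := by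
    rw [e, neg_div]
    have h' : 0 ≤ u^3*(40-15*u+9*u^2)/(64*(1+u)) := div_nonneg hnum (by linarith)
    nlinarith [pow_nonneg h0 3]
  have hb2 : -(3/4*u^3) ≤ y^2 - p^2 := by
    rw [e, neg_div, neg_le_neg_iff, div_le_iff₀ (show (0:ℝ) < 64*(1+u) by linarith)]
    nlinarith [pow_nonneg h0 3]
  have hppos : (3:ℝ)/4 ≤ p := by rw [hp]; nlinarith
  have hyp : 0 < y + p := by linarith
  have hprod : |y - p| * (y + p) = |y^2 - p^2| := by
    rw [← abs_of_pos hyp, ← abs_mul]; ring_nf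
  have hup : |y - p| * (3/4) ≤ |y - p| * (y + p) :=
    mul_le_mul_of_nonneg_left (by linarith) (abs_nonneg _)
  have habs : |y^2 - p^2| ≤ 3/4*u^3 := abs_le.mpr ⟨hb2, hb1⟩
  linarith

noncomputable def Gf (m : ℕ) (θ : ℝ) : ℝ := ∑ k ∈ Finset.range m, Real.sin θ ^ (2*k)

lemma Gf_cont (m : ℕ) : Continuous (Gf m) := by
  unfold Gf; exact continuous_finset_sum _ (fun k _ => (Real.continuous_sin.pow _))

lemma Gf_ge_one (m : ℕ) (hm : 1 ≤ m) (θ : ℝ) : 1 ≤ Gf m θ := by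
  unfold Gf
  have h0 : (Real.sin θ)^(2*0) = 1 := by norm_num
  calc (1:ℝ) = ∑ k ∈ Finset.range 1, Real.sin θ ^ (2*k) := by norm_num
    _ ≤ _ := Finset.sum_le_sum_of_subset_of_nonneg
        (Finset.range_subset_range.mpr hm) (fun i _ _ => by rw [pow_mul]; positivity)

lemma Gf_le (m : ℕ) (θ : ℝ) : Gf m θ ≤ m := by
  unfold Gf
  calc ∑ k ∈ Finset.range m, Real.sin θ ^ (2*k) ≤ ∑ k ∈ Finset.range m, 1 := by
        apply Finset.sum_le_sum
        intro k _
        rw [pow_mul]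
        apply pow_le_one₀ (sq_nonneg _)
        nlinarith [Real.neg_one_le_sin θ, Real.sin_le_one θ]
    _ = m := by simp

lemma Gf_nonneg (m : ℕ) (θ : ℝ) : 0 ≤ Gf m θ := by
  unfold Gf
  exact Finset.sum_nonneg (fun k _ => by rw [pow_mul]; positivity)

/-- Key factorization: F A − F (A sin θ) = (A cos θ)²/2 · (1 + (A^(2m−2)/m)·G θ). -/
lemma Ffact (m : ℕ) (hm : 2 ≤ m) (A θ : ℝ) :
    (A^2/2 + A^(2*m)/(2*m)) - ((A*Real.sin θ)^2/2 + (A*Real.sin θ)^(2*m)/(2*m))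
      = (A*Real.cos θ)^2/2 * (1 + (A^(2*m-2)/m) * Gf m θ) := by
  have hm0 : (0:ℝ) < (m:ℝ) := by exact_mod_cast (show 0 < m by omega)
  set s := Real.sin θ
  set c := Real.cos θ
  have hsc : c^2 = 1 - s^2 := by
    have := Real.sin_sq_add_cos_sq θ; linarith
  have hgeom : 1 - (s^2)^m = (1 - s^2) * ∑ k ∈ Finset.range m, (s^2)^k := by
    have := geom_sum_mul (s^2) m
    nlinarith [this]
  have hG : Gf m θ = ∑ k ∈ Finset.range m, (s^2)^k := by
    unfold Gf
    exact Finset.sum_congr rfl (fun k _ => by rw [pow_mul])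
  have hpow : A^(2*m) = A^2 * A^(2*m-2) := by
    rw [← pow_add]; congr 1; omega
  have hsp : (A*s)^(2*m) = A^(2*m) * (s^2)^m := by
    rw [mul_pow, ← pow_mul, mul_comm 2 m, mul_comm m 2]
  rw [hG, hsp, mul_pow A s, mul_pow A c, hsc, hpow]
  have hm' : ((m:ℝ)) ≠ 0 := ne_of_gt hm0
  field_simp
  linear_combination (A^2 * A^(2*m-2)) * hgeom

lemma image_Asin (A : ℝ) (hA : 0 < A) :
    (fun θ => A * Real.sin θ) '' (Ico 0 (π/2)) = Ico 0 A := by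
  have hπ : (0:ℝ) < π/2 := by positivity
  ext y
  constructor
  · rintro ⟨θ, ⟨h0, h1⟩, rfl⟩
    simp only [mem_Ico]
    have hsn : 0 ≤ Real.sin θ :=
      Real.sin_nonneg_of_nonneg_of_le_pi h0 (by linarith [Real.pi_pos])
    have hs1 : Real.sin θ < 1 := by
      have := Real.strictMonoOn_sin
        (show θ ∈ Icc (-(π/2)) (π/2) by constructor <;> [linarith; linarith])
        (show (π/2) ∈ Icc (-(π/2)) (π/2) by constructor <;> linarith)
        h1
      rwa [Real.sin_pi_div_two] at this
    exact ⟨by positivity, by nlinarith⟩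
  · rintro ⟨h0, h1⟩
    have hy1 : y/A < 1 := (div_lt_one hA).mpr h1
    have hy0 : 0 ≤ y/A := by positivity
    refine ⟨Real.arcsin (y/A), ⟨Real.arcsin_nonneg.mpr hy0, ?_⟩, ?_⟩
    · exact Real.arcsin_lt_pi_div_two.mpr hy1
    · show A * Real.sin (Real.arcsin (y/A)) = y
      rw [Real.sin_arcsin (by linarith) (by linarith)]
      field_simp

lemma inj_Asin (A : ℝ) (hA : 0 < A) : InjOn (fun θ => A * Real.sin θ) (Ico 0 (π/2)) := by
  intro a ha b hb hab
  have hs : Real.sin a = Real.sin b := mul_left_cancel₀ (ne_of_gt hA) hab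
  have hmem : ∀ x : ℝ, x ∈ Ico 0 (π/2) → x ∈ Icc (-(π/2)) (π/2) := by
    intro x hx
    exact ⟨by linarith [hx.1, Real.pi_pos], le_of_lt hx.2⟩
  exact Real.injOn_sin (hmem a ha) (hmem b hb) hs

lemma subst_lemma (m : ℕ) (hm : 2 ≤ m) (A : ℝ) (hA : 0 < A) :
    ∫ x in (0:ℝ)..A, 1/Real.sqrt ((A^2/2 + A^(2*m)/(2*m)) - (x^2/2 + x^(2*m)/(2*m)))
      = ∫ θ in (0:ℝ)..(π/2), Real.sqrt 2 / Real.sqrt (1 + (A^(2*m-2)/(m:ℝ)) * Gf m θ) := by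
  have hπ : (0:ℝ) < π/2 := by positivity
  have hderiv : ∀ θ ∈ Ico 0 (π/2), HasDerivWithinAt (fun θ => A * Real.sin θ)
      (A * Real.cos θ) (Ico 0 (π/2)) θ :=
    fun θ _ => ((Real.hasDerivAt_sin θ).const_mul A).hasDerivWithinAt
  have hsub := MeasureTheory.integral_image_eq_integral_abs_deriv_smul measurableSet_Ico hderiv
    (inj_Asin A hA)
    (fun x => 1/Real.sqrt ((A^2/2 + A^(2*m)/(2*m)) - (x^2/2 + x^(2*m)/(2*m))))
  rw [image_Asin A hA] at hsub
  rw [intervalIntegral.integral_of_le hA.le, intervalIntegral.integral_of_le hπ.le,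
    MeasureTheory.integral_Ioc_eq_integral_Ioo, ← MeasureTheory.integral_Ico_eq_integral_Ioo,
    hsub, MeasureTheory.integral_Ioc_eq_integral_Ioo, ← MeasureTheory.integral_Ico_eq_integral_Ioo]
  apply MeasureTheory.setIntegral_congr_fun measurableSet_Ico
  intro θ hθ
  have hcos : 0 < Real.cos θ := Real.cos_pos_of_mem_Ioo
    ⟨by linarith [hθ.1, Real.pi_pos], hθ.2⟩
  have hE0 : 0 ≤ (A^(2*m-2)/(m:ℝ)) * Gf m θ := by
    have := Gf_nonneg m θ
    have hm0 : (0:ℝ) < (m:ℝ) := by exact_mod_cast (show 0 < m by omega)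
    positivity
  have hE : 0 < 1 + (A^(2*m-2)/(m:ℝ)) * Gf m θ := by linarith
  set E := 1 + (A^(2*m-2)/(m:ℝ)) * Gf m θ with hEdef
  have hfac := Ffact m hm A θ
  rw [← hEdef] at hfac
  have hc : 0 < A * Real.cos θ := by positivity
  have hsqE : 0 < Real.sqrt E := Real.sqrt_pos.mpr hE
  have hsq2 : 0 < Real.sqrt 2 := by positivity
  have hval : (A * Real.cos θ)^2/2 * E
      = ((A * Real.cos θ) * Real.sqrt E / Real.sqrt 2)^2 := by
    rw [div_pow, mul_pow, mul_pow, Real.sq_sqrt hE.le, Real.sq_sqrt (by norm_num : (0:ℝ) ≤ 2)]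
    ring
  show |A * Real.cos θ| • (1/Real.sqrt ((A^2/2 + A^(2*m)/(2*m))
      - ((A*Real.sin θ)^2/2 + (A*Real.sin θ)^(2*m)/(2*m)))) = Real.sqrt 2 / Real.sqrt E
  rw [hfac, hval, Real.sqrt_sq (by positivity), abs_of_pos hc, smul_eq_mul]
  have h1 := ne_of_gt hc
  have h2 := ne_of_gt hsqE
  have h3 := ne_of_gt hsq2
  field_simp

lemma int_Gf (m : ℕ) : ∫ θ in (0:ℝ)..(π/2), Gf m θ = π/2 * cc m := by
  unfold Gf
  rw [intervalIntegral.integral_finset_sum (f := fun k θ => Real.sin θ ^ (2*k)) (fun k _ => (Real.continuous_sin.pow (2*k)).intervalIntegrable _ _)]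
  rw [← sum_wr, Finset.mul_sum]
  apply Finset.sum_congr rfl
  intro k _
  rw [wallis k]
  unfold wr
  ring

lemma int_Gf_sq (m : ℕ) : ∫ θ in (0:ℝ)..(π/2), (Gf m θ)^2
    = π/2 * ∑ k ∈ Finset.range m, ∑ j ∈ Finset.range m, wr (k+j) := by
  have hexp : ∀ θ : ℝ, (Gf m θ)^2
      = ∑ k ∈ Finset.range m, ∑ j ∈ Finset.range m, Real.sin θ ^ (2*(k+j)) := by
    intro θ
    unfold Gf
    rw [sq, Finset.sum_mul_sum]
    apply Finset.sum_congr rfl; intro k _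
    apply Finset.sum_congr rfl; intro j _
    rw [← pow_add]; congr 1; ring
  simp only [hexp]
  rw [intervalIntegral.integral_finset_sum (f := fun k θ => ∑ j ∈ Finset.range m, Real.sin θ ^ (2*(k+j))) (fun k _ =>
    (continuous_finset_sum _ (fun j _ => (Real.continuous_sin.pow (2*(k+j))))).intervalIntegrable _ _)]
  rw [Finset.mul_sum]
  apply Finset.sum_congr rfl
  intro k _
  rw [intervalIntegral.integral_finset_sum (f := fun j θ => Real.sin θ ^ (2*(k+j))) (fun j _ => (Real.continuous_sin.pow (2*(k+j))).intervalIntegrable _ _)]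
  rw [Finset.mul_sum]
  apply Finset.sum_congr rfl
  intro j _
  rw [wallis (k+j)]
  unfold wr
  ring

lemma main_est (m : ℕ) (hm : 2 ≤ m) (ε : ℝ) (hε0 : 0 < ε) (hεm : ε * m ≤ 1/2) :
    |(∫ θ in (0:ℝ)..(π/2), 1/Real.sqrt (1 + ε * Gf m θ))
      - (π/2 - ε/2 * (π/2 * cc m)
        + 3/8*ε^2 * (π/2 * ∑ k ∈ Finset.range m, ∑ j ∈ Finset.range m, wr (k+j)))|
      ≤ π/2 * (ε*m)^3 := by
  have hm1 : (1:ℝ) ≤ (m:ℝ) := by exact_mod_cast (show 1 ≤ m by omega)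
  have hub : ∀ θ : ℝ, 0 ≤ ε * Gf m θ ∧ ε * Gf m θ ≤ ε * m := by
    intro θ
    constructor
    · exact mul_nonneg hε0.le (Gf_nonneg m θ)
    · exact mul_le_mul_of_nonneg_left (Gf_le m θ) hε0.le
  have hpos : ∀ θ : ℝ, 0 < 1 + ε * Gf m θ := fun θ => by linarith [(hub θ).1]
  have hc0 : Continuous (fun θ : ℝ => 1 + ε * Gf m θ) :=
    continuous_const.add (continuous_const.mul (Gf_cont m))
  have hc1 : Continuous (fun θ : ℝ => 1/Real.sqrt (1 + ε * Gf m θ)) := by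
    apply continuous_const.div (Real.continuous_sqrt.comp hc0)
    exact fun θ => ne_of_gt (Real.sqrt_pos.mpr (hpos θ))
  have hc2 : Continuous (fun θ : ℝ => 1 - ε * Gf m θ/2 + 3/8*(ε * Gf m θ)^2) := by
    apply Continuous.add
    · exact continuous_const.sub ((continuous_const.mul (Gf_cont m)).div_const 2)
    · exact continuous_const.mul ((continuous_const.mul (Gf_cont m)).pow 2)
  have hkey : ∀ θ : ℝ, ‖1/Real.sqrt (1 + ε * Gf m θ)
      - (1 - ε * Gf m θ/2 + 3/8*(ε * Gf m θ)^2)‖ ≤ (ε*m)^3 := by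
    intro θ
    rw [Real.norm_eq_abs]
    calc |1/Real.sqrt (1 + ε * Gf m θ) - (1 - ε * Gf m θ/2 + 3/8*(ε * Gf m θ)^2)|
        ≤ (ε * Gf m θ)^3 := taylor_sqrt_bound _ (hub θ).1 (by linarith [(hub θ).2])
      _ ≤ (ε*m)^3 := pow_le_pow_left₀ (hub θ).1 (hub θ).2 3
  have hnorm := intervalIntegral.norm_integral_le_of_norm_le_const
    (C := (ε*m)^3) (a := (0:ℝ)) (b := π/2)
    (f := fun θ => 1/Real.sqrt (1 + ε * Gf m θ)
      - (1 - ε * Gf m θ/2 + 3/8*(ε * Gf m θ)^2))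
    (fun x _ => hkey x)
  rw [intervalIntegral.integral_sub (hc1.intervalIntegrable _ _) (hc2.intervalIntegrable _ _),
    Real.norm_eq_abs] at hnorm
  have hP : ∫ θ in (0:ℝ)..(π/2), (1 - ε * Gf m θ/2 + 3/8*(ε * Gf m θ)^2)
      = π/2 - ε/2 * (π/2 * cc m)
        + 3/8*ε^2 * (π/2 * ∑ k ∈ Finset.range m, ∑ j ∈ Finset.range m, wr (k+j)) := by
    have hrw : (fun θ : ℝ => 1 - ε * Gf m θ/2 + 3/8*(ε * Gf m θ)^2)
        = fun θ : ℝ => (1 - (ε/2) * Gf m θ) + (3/8*ε^2) * (Gf m θ)^2 := by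
      funext θ; ring
    rw [hrw]
    have hi1 : Continuous (fun θ : ℝ => 1 - (ε/2) * Gf m θ) :=
      continuous_const.sub (continuous_const.mul (Gf_cont m))
    have hi2 : Continuous (fun θ : ℝ => (3/8*ε^2) * (Gf m θ)^2) :=
      continuous_const.mul ((Gf_cont m).pow 2)
    rw [intervalIntegral.integral_add (hi1.intervalIntegrable _ _) (hi2.intervalIntegrable _ _)]
    rw [intervalIntegral.integral_sub (f := fun _ => (1:ℝ)) (g := fun θ => ε/2 * Gf m θ) (continuous_const.intervalIntegrable _ _)
      ((continuous_const.mul (Gf_cont m)).intervalIntegrable _ _)]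
    rw [intervalIntegral.integral_const_mul, intervalIntegral.integral_const_mul,
      int_Gf, int_Gf_sq]
    simp
    try ring
  rw [hP] at hnorm
  have : |π/2 - 0| = π/2 := by
    rw [sub_zero, abs_of_pos (by positivity)]
  rw [this] at hnorm
  linarith [hnorm]

lemma T_est (m : ℕ) (hm : 2 ≤ m) (A : ℝ) (hA0 : 0 < A) (hA1 : A < 1/2) :
    |2 * Real.sqrt 2 * (∫ x in (0:ℝ)..A,
        1 / Real.sqrt ((A^2/2 + A^(2*m)/(2*m)) - (x^2/2 + x^(2*m)/(2*m))))
      - (2*π - π*(A^(2*m-2)/(m:ℝ))*cc m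
        + 3*π/4*(A^(2*m-2)/(m:ℝ))^2 * ∑ k ∈ Finset.range m, ∑ j ∈ Finset.range m, wr (k+j))|
      ≤ 2*π*A^(6*m-6) := by
  have hm0 : (0:ℝ) < (m:ℝ) := by exact_mod_cast (show 0 < m by omega)
  rw [subst_lemma m hm A hA0]
  set ε := A^(2*m-2)/(m:ℝ) with hεdef
  set I := ∫ θ in (0:ℝ)..(π/2), 1/Real.sqrt (1 + ε * Gf m θ) with hIdef
  have hε0 : 0 < ε := by rw [hεdef]; positivity
  have hεm : ε * m = A^(2*m-2) := by rw [hεdef]; field_simp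
  have hA2 : A^(2*m-2) ≤ A^2 := pow_le_pow_of_le_one hA0.le (by linarith) (by omega)
  have hεhalf : ε * m ≤ 1/2 := by rw [hεm]; nlinarith
  have hsplit : (fun θ : ℝ => Real.sqrt 2 / Real.sqrt (1 + ε * Gf m θ))
      = fun θ => Real.sqrt 2 * (1/Real.sqrt (1 + ε * Gf m θ)) :=
    funext fun θ => by rw [mul_one_div]
  rw [hsplit, intervalIntegral.integral_const_mul, ← hIdef]
  have h4 : 2 * Real.sqrt 2 * (Real.sqrt 2 * I) = 4 * I := by
    rw [← mul_assoc, mul_assoc 2, Real.mul_self_sqrt (by norm_num : (0:ℝ) ≤ 2)]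
    ring
  rw [h4]
  have hme := main_est m hm ε hε0 hεhalf
  set P := π/2 - ε/2 * (π/2 * cc m)
    + 3/8*ε^2 * (π/2 * ∑ k ∈ Finset.range m, ∑ j ∈ Finset.range m, wr (k+j)) with hPdef
  have hQ : 2*π - π*ε*cc m
      + 3*π/4*ε^2 * ∑ k ∈ Finset.range m, ∑ j ∈ Finset.range m, wr (k+j) = 4*P := by
    rw [hPdef]; ring
  rw [hQ]
  have hfin : (ε*(m:ℝ))^3 = A^(6*m-6) := by
    rw [hεm, ← pow_mul]
    congr 1
    omega
  calc |4*I - 4*P| = 4 * |I - P| := by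
        rw [show 4*I - 4*P = 4*(I-P) by ring, abs_mul, abs_of_pos (show (0:ℝ) < 4 by norm_num)]
    _ ≤ 4 * (π/2 * (ε*m)^3) := by linarith [hme]
    _ = 2*π*A^(6*m-6) := by rw [hfin]; ring

/-- Taylor expansion at `A = 0` of the period function of `ẋ = −y, ẏ = x + x^(2m−1)`:
`T(A) = 2π(1 − ((2m−1)!!/(2m)!!) A^(2m−2) + S(m) A^(4m−4)) + O(A^(6m−6))`. -/
theorem period_function_taylor_at_zero (m : ℕ) (hm : 2 ≤ m)
    (F T : ℝ → ℝ)
    (hF : ∀ x : ℝ, F x = x ^ 2 / 2 + x ^ (2 * m) / (2 * m))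
    (hT : ∀ A : ℝ, T A = 2 * Real.sqrt 2 * ∫ x in (0:ℝ)..A, 1 / Real.sqrt (F A - F x))
    (S : ℝ)
    (hS : S = (2 * (m : ℝ) - 1) * (Nat.doubleFactorial (4 * m - 1) : ℝ) /
            ((m : ℝ) * (Nat.doubleFactorial (4 * m) : ℝ))
        - ((m : ℝ) - 1) * (Nat.doubleFactorial (2 * m - 1) : ℝ) /
            ((m : ℝ) * (Nat.doubleFactorial (2 * m) : ℝ))) :
    ∃ C > (0 : ℝ), ∃ δ > (0 : ℝ), ∀ A : ℝ, 0 < A → A < δ →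
      |T A - 2 * π * (1
          - ((Nat.doubleFactorial (2 * m - 1) : ℝ) / (Nat.doubleFactorial (2 * m) : ℝ))
              * A ^ (2 * m - 2)
          + S * A ^ (4 * m - 4))| ≤ C * A ^ (6 * m - 6) := by
  obtain ⟨q, rfl⟩ : ∃ q, m = q + 2 := ⟨m - 2, by omega⟩
  refine ⟨2*π, by positivity, 1/2, by norm_num, fun A hA0 hA1 => ?_⟩
  rw [hT A]
  simp only [hF]
  have hmain := T_est (q+2) (by omega) A hA0 hA1
  have hMQ : 2 * π * (1
        - ((Nat.doubleFactorial (2 * (q+2) - 1) : ℝ) / (Nat.doubleFactorial (2 * (q+2)) : ℝ))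
            * A ^ (2 * (q+2) - 2)
        + S * A ^ (4 * (q+2) - 4))
      = 2*π - π*(A^(2*(q+2)-2)/((q+2:ℕ):ℝ))*cc (q+2)
        + 3*π/4*(A^(2*(q+2)-2)/((q+2:ℕ):ℝ))^2
          * ∑ k ∈ Finset.range (q+2), ∑ j ∈ Finset.range (q+2), wr (k+j) := by
    rw [hS, Dval q]
    have hcc : cc (q+2) = ((2*(q+1)+1)‼ : ℝ)/((2*(q+1))‼ : ℝ) := rfl
    rw [hcc]
    simp only [show 2*(q+2)-1 = 2*q+3 from by omega, show 2*(q+2)-2 = 2*q+2 from by omega,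
      show 2*(q+2) = 2*q+4 from by omega, show 4*(q+2)-4 = 4*q+4 from by omega,
      show 4*(q+2)-1 = 4*q+7 from by omega, show 4*(q+2) = 4*q+8 from by omega,
      show 2*(q+1)+1 = 2*q+3 from by omega, show 2*(q+1) = 2*q+2 from by omega,
      show 2*q+4-1 = 2*q+3 from by omega, show 2*q+4-2 = 2*q+2 from by omega,
      show 4*q+8-1 = 4*q+7 from by omega, show 4*q+8-4 = 4*q+4 from by omega]
    have e1 : ((4*q+8)‼ : ℝ) = (4*(q:ℝ)+8)*((4*(q:ℝ)+6)*((4*q+4)‼ : ℝ)) := by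
      rw [show 4*q+8 = (4*q+6)+2 from by omega, Nat.doubleFactorial_add_two,
        show 4*q+6 = (4*q+4)+2 from by omega, Nat.doubleFactorial_add_two]
      push_cast; ring
    have e2 : ((2*q+4)‼ : ℝ) = (2*(q:ℝ)+4)*((2*(q:ℝ)+2)*((2*q)‼ : ℝ)) := by
      rw [show 2*q+4 = (2*q+2)+2 from by omega, Nat.doubleFactorial_add_two,
        show 2*q+2 = (2*q)+2 from by omega, Nat.doubleFactorial_add_two]
      push_cast; ring
    have e3 : ((2*q+2)‼ : ℝ) = (2*(q:ℝ)+2)*((2*q)‼ : ℝ) := by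
      rw [show 2*q+2 = (2*q)+2 from by omega, Nat.doubleFactorial_add_two]
      push_cast; ring
    rw [e1, e2, e3]
    have hA4 : A^(4*q+4) = A^(2*q+2)*A^(2*q+2) := by rw [← pow_add]; congr 1; omega
    rw [hA4]
    have p1 := df_pos_real (2*q)
    have p2 := df_pos_real (2*q+3)
    have p3 := df_pos_real (4*q+4)
    have p4 := df_pos_real (4*q+7)
    have hq2 : ((q+2:ℕ):ℝ) = (q:ℝ)+2 := by push_cast; ring
    rw [hq2]
    have hqpos : (0:ℝ) < (q:ℝ)+2 := by positivity
    field_simp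
    ring
  rw [hMQ]
  exact hmain
end

section
/- Let m ≥ 2 be an integer, let F(x) = x²/2 + x^{2m}/(2m), and let T(A) = 2√2 ∫₀^A dx/√(F(A) − F(x)). Then lim_{A → ∞} A^{m−1} T(A) = 2 B(1/(2m), 1/2)/√m, where B denotes the Euler Beta function. -/
open Real Set Filter MeasureTheory intervalIntegral Topology

lemma real_beta_aux (p q : ℝ) (hp : 0 < p) (hq : 0 < q) :
    ∫ u in (0:ℝ)..1, u ^ (p - 1) * (1 - u) ^ (q - 1) =
      Real.Gamma p * Real.Gamma q / Real.Gamma (p + q) := by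
  have key := Complex.Gamma_mul_Gamma_eq_betaIntegral (s := (p:ℂ)) (t := (q:ℂ))
    (by simpa using hp) (by simpa using hq)
  have hbeta : Complex.betaIntegral p q =
      ((∫ u in (0:ℝ)..1, u ^ (p - 1) * (1 - u) ^ (q - 1) : ℝ) : ℂ) := by
    rw [Complex.betaIntegral, ← intervalIntegral.integral_ofReal]
    apply intervalIntegral.integral_congr
    intro x hx
    rw [uIcc_of_le (by norm_num : (0:ℝ) ≤ 1)] at hx
    show _ = ((_ : ℝ) : ℂ)
    rw [Complex.ofReal_mul, Complex.ofReal_cpow hx.1 (p-1),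
      Complex.ofReal_cpow (by linarith [hx.2] : (0:ℝ) ≤ 1 - x) (q-1)]
    push_cast
    ring
  rw [hbeta, ← Complex.ofReal_add, Complex.Gamma_ofReal, Complex.Gamma_ofReal,
    Complex.Gamma_ofReal, ← Complex.ofReal_mul, ← Complex.ofReal_mul] at key
  have := Complex.ofReal_inj.mp key
  have hG : Real.Gamma (p + q) ≠ 0 := (Real.Gamma_pos_of_pos (by linarith)).ne'
  field_simp
  linarith [this]

lemma subst_lemma_aux (n : ℕ) (hn : 0 < n) :
    ∫ u in (0:ℝ)..1, u ^ ((1/(n:ℝ)) - 1) * (1 - u) ^ ((1/2:ℝ) - 1)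
      = n * ∫ s in (0:ℝ)..1, 1 / Real.sqrt (1 - s ^ n) := by
  have hn' : (n:ℝ) ≠ 0 := Nat.cast_ne_zero.mpr hn.ne'
  have himg : (fun x : ℝ => x ^ n) '' Ioo 0 1 = Ioo 0 1 := by
    ext u
    constructor
    · rintro ⟨x, ⟨hx0, hx1⟩, rfl⟩
      exact ⟨pow_pos hx0 n, pow_lt_one₀ hx0.le hx1 hn.ne'⟩
    · rintro ⟨hu0, hu1⟩
      refine ⟨u ^ (1/(n:ℝ)), ⟨Real.rpow_pos_of_pos hu0 _,
        Real.rpow_lt_one hu0.le hu1 (by positivity)⟩, ?_⟩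
      show (u ^ (1/(n:ℝ))) ^ n = u
      rw [← Real.rpow_natCast (u ^ (1/(n:ℝ))) n, ← Real.rpow_mul hu0.le]
      rw [one_div_mul_cancel hn', Real.rpow_one]
  have hderiv : ∀ x ∈ Ioo (0:ℝ) 1,
      HasDerivWithinAt (fun x : ℝ => x ^ n) ((n:ℝ) * x ^ (n-1)) (Ioo 0 1) x :=
    fun x _ => (hasDerivAt_pow n x).hasDerivWithinAt
  have hinj : InjOn (fun x : ℝ => x ^ n) (Ioo 0 1) :=
    (pow_left_strictMonoOn₀ hn.ne').injOn.mono (fun z hz => le_of_lt hz.1)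
  have key := integral_image_eq_integral_abs_deriv_smul measurableSet_Ioo hderiv hinj
    (fun u => u ^ ((1/(n:ℝ)) - 1) * (1 - u) ^ ((1/2:ℝ) - 1))
  rw [himg] at key
  rw [intervalIntegral.integral_of_le zero_le_one, integral_Ioc_eq_integral_Ioo, key,
    intervalIntegral.integral_of_le zero_le_one, integral_Ioc_eq_integral_Ioo,
    ← MeasureTheory.integral_const_mul]
  apply MeasureTheory.setIntegral_congr_fun measurableSet_Ioo
  intro x hx
  obtain ⟨hx0, hx1⟩ := hx
  dsimp only
  have hxn0 : (0:ℝ) < x ^ n := pow_pos hx0 n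
  have hxn1 : x ^ n < 1 := pow_lt_one₀ hx0.le hx1 hn.ne'
  have h1 : ((x:ℝ) ^ n) ^ ((1/(n:ℝ)) - 1) = x ^ (1 - (n:ℝ)) := by
    rw [← Real.rpow_natCast x n, ← Real.rpow_mul hx0.le]
    congr 1
    field_simp
  have h2 : ((1:ℝ) - x ^ n) ^ ((1/2:ℝ) - 1) = 1 / Real.sqrt (1 - x ^ n) := by
    rw [show (1/2:ℝ) - 1 = -(1/2) by norm_num,
      Real.rpow_neg (by linarith : (0:ℝ) ≤ 1 - x ^ n),
      Real.sqrt_eq_rpow, one_div]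
    norm_num
  have h3 : |(n:ℝ) * x ^ (n-1)| = (n:ℝ) * x ^ (n-1) := by
    rw [abs_of_nonneg]; positivity
  rw [smul_eq_mul, h3, h1, h2]
  have h4 : x ^ (n-1) * x ^ (1 - (n:ℝ)) = 1 := by
    rw [← Real.rpow_natCast x (n-1), ← Real.rpow_add hx0]
    rw [Nat.cast_sub hn, Nat.cast_one]
    norm_num
  calc (n:ℝ) * x ^ (n-1) * (x ^ (1 - (n:ℝ)) * (1 / Real.sqrt (1 - x ^ n)))
      = (n:ℝ) * (x ^ (n-1) * x ^ (1 - (n:ℝ))) * (1 / Real.sqrt (1 - x ^ n)) := by ring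
    _ = (n:ℝ) * (1 / Real.sqrt (1 - x ^ n)) := by rw [h4]; ring

/-- rescaled integrand family -/
noncomputable def auxG (m : ℕ) (A s : ℝ) : ℝ :=
  2 * Real.sqrt 2 / Real.sqrt ((1 - s^2)/(2*A^(2*m-2)) + (1 - s^(2*m))/(2*(m:ℝ)))

/-- limit integrand -/
noncomputable def auxf (m : ℕ) (s : ℝ) : ℝ :=
  2 * Real.sqrt 2 / Real.sqrt ((1 - s^(2*m))/(2*(m:ℝ)))

lemma sqrt2_sqrt2m (m : ℕ) (hm : 0 < m) :
    2 * Real.sqrt 2 * Real.sqrt (2*(m:ℝ)) = 4 * Real.sqrt m := by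
  have h4 : Real.sqrt 4 = 2 := by
    rw [show (4:ℝ) = 2^2 by norm_num, Real.sqrt_sq (by norm_num : (0:ℝ) ≤ 2)]
  rw [mul_assoc, ← Real.sqrt_mul (by norm_num : (0:ℝ) ≤ 2),
    show (2:ℝ)*(2*(m:ℝ)) = 4*(m:ℝ) by ring,
    Real.sqrt_mul (by norm_num : (0:ℝ) ≤ 4), h4]
  ring

lemma aux_eq (m : ℕ) (hm : 2 ≤ m) (F : ℝ → ℝ)
    (hF : ∀ x : ℝ, F x = x ^ 2 / 2 + x ^ (2 * m) / (2 * m))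
    (A : ℝ) (hA : 1 ≤ A) :
    A ^ (m - 1) * (2 * Real.sqrt 2 * ∫ x in (0:ℝ)..A, 1 / Real.sqrt (F A - F x))
      = ∫ s in (0:ℝ)..1, auxG m A s := by
  have hA0 : (0:ℝ) < A := lt_of_lt_of_le one_pos hA
  have hsub : (∫ x in (0:ℝ)..A, 1 / Real.sqrt (F A - F x))
      = A * ∫ s in (0:ℝ)..1, 1 / Real.sqrt (F A - F (A * s)) := by
    rw [intervalIntegral.integral_comp_mul_left (fun x => 1 / Real.sqrt (F A - F x)) hA0.ne',
      mul_zero, mul_one, smul_eq_mul, ← mul_assoc, mul_inv_cancel₀ hA0.ne', one_mul]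
  rw [hsub]
  have hpow : A ^ (m-1) * A = A ^ m := by
    rw [← pow_succ]
    congr 1
    omega
  have : A ^ (m-1) * (2 * Real.sqrt 2 *
        (A * ∫ s in (0:ℝ)..1, 1 / Real.sqrt (F A - F (A * s))))
      = (2 * Real.sqrt 2 * A ^ m) * ∫ s in (0:ℝ)..1, 1 / Real.sqrt (F A - F (A * s)) := by
    rw [← hpow]; ring
  rw [this, ← intervalIntegral.integral_const_mul]
  apply intervalIntegral.integral_congr
  intro s hs
  rw [uIcc_of_le (by norm_num : (0:ℝ) ≤ 1)] at hs
  obtain ⟨hs0, hs1⟩ := hs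
  have hmR : (0:ℝ) < (m:ℝ) := by positivity
  have hAn2 : (0:ℝ) < A ^ (2*m-2) := by positivity
  have hFA : F A - F (A * s)
      = A^(2*m) * ((1 - s^2)/(2*A^(2*m-2)) + (1 - s^(2*m))/(2*(m:ℝ))) := by
    have hA2 : A ^ (2*m) = A ^ (2*m-2) * A ^ 2 := by
      rw [← pow_add]; congr 1; omega
    rw [hF, hF, mul_pow, mul_pow]
    simp only [hA2]
    field_simp
    ring
  set D : ℝ := (1 - s^2)/(2*A^(2*m-2)) + (1 - s^(2*m))/(2*(m:ℝ)) with hD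
  have hDnn : 0 ≤ D := by
    have h1 : s^2 ≤ 1 := pow_le_one₀ hs0 hs1
    have h2 : s^(2*m) ≤ 1 := pow_le_one₀ hs0 hs1
    have : (0:ℝ) ≤ (1 - s^2)/(2*A^(2*m-2)) := by
      apply div_nonneg (by linarith) (by positivity)
    have : (0:ℝ) ≤ (1 - s^(2*m))/(2*(m:ℝ)) := by
      apply div_nonneg (by linarith) (by positivity)
    rw [hD]; linarith
  have hroot : Real.sqrt (A^(2*m) * D) = A^m * Real.sqrt D := by
    rw [Real.sqrt_mul (by positivity) D]
    congr 1
    rw [show 2*m = m*2 by ring, pow_mul]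
    exact Real.sqrt_sq (by positivity)
  have hAm : (A:ℝ)^m ≠ 0 := by positivity
  show 2 * Real.sqrt 2 * A ^ m * (1 / Real.sqrt (F A - F (A * s))) = auxG m A s
  rw [hFA, hroot, auxG]
  calc 2 * Real.sqrt 2 * A^m * (1/(A^m * Real.sqrt D))
      = (A^m * (A^m)⁻¹) * (2 * Real.sqrt 2 * (Real.sqrt D)⁻¹) := by
        rw [one_div, mul_inv]; ring
    _ = 2 * Real.sqrt 2 / Real.sqrt D := by
        rw [mul_inv_cancel₀ hAm, one_mul, div_eq_mul_inv]

lemma aux_conv (m : ℕ) (hm : 2 ≤ m) :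
    Tendsto (fun A : ℝ => ∫ s in (0:ℝ)..1, auxG m A s) atTop
      (nhds (∫ s in (0:ℝ)..1, auxf m s)) := by
  have hmR : (0:ℝ) < (m:ℝ) := by positivity
  apply intervalIntegral.tendsto_integral_filter_of_dominated_convergence
    (bound := fun s => 4 * Real.sqrt m * (1 - s) ^ (-(1/2) : ℝ))
  · -- measurability
    filter_upwards with A
    apply Measurable.aestronglyMeasurable
    apply Measurable.div measurable_const
    exact (Real.continuous_sqrt.comp (by continuity)).measurable
  · -- bound
    filter_upwards [eventually_ge_atTop (1:ℝ)] with A hA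
    apply ae_of_all
    intro x hx
    rw [uIoc_of_le (by norm_num : (0:ℝ) ≤ 1)] at hx
    obtain ⟨hx0, hx1⟩ := hx
    rcases eq_or_lt_of_le hx1 with h1 | h1
    · subst h1
      simp only [auxG, one_pow, sub_self, zero_div, add_zero, Real.sqrt_zero, div_zero,
        norm_zero, Real.zero_rpow (by norm_num : (-(1/2):ℝ) ≠ 0), mul_zero, le_refl]
    · have hAn2 : (0:ℝ) < A ^ (2*m-2) := by positivity
      have hpow_le : x^(2*m) ≤ x := pow_le_of_le_one hx0.le hx1 (by omega)
      have hx2 : x^2 ≤ 1 := pow_le_one₀ hx0.le hx1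
      set D : ℝ := (1 - x^2)/(2*A^(2*m-2)) + (1 - x^(2*m))/(2*(m:ℝ)) with hD
      have ht1 : (0:ℝ) ≤ (1 - x^2)/(2*A^(2*m-2)) := div_nonneg (by linarith) (by positivity)
      have hDge : (1-x)/(2*(m:ℝ)) ≤ D := by
        have : (1-x)/(2*(m:ℝ)) ≤ (1 - x^(2*m))/(2*(m:ℝ)) := by gcongr <;> linarith
        rw [hD]; linarith
      have hcpos : (0:ℝ) < (1-x)/(2*(m:ℝ)) := by
        apply div_pos (by linarith) (by positivity)
      have hGnn : 0 ≤ auxG m A x := by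
        rw [auxG]
        positivity
      rw [Real.norm_of_nonneg hGnn, auxG]
      calc 2 * Real.sqrt 2 / Real.sqrt D
          ≤ 2 * Real.sqrt 2 / Real.sqrt ((1-x)/(2*(m:ℝ))) := by
            apply div_le_div_of_nonneg_left (by positivity)
              (Real.sqrt_pos.mpr hcpos) (Real.sqrt_le_sqrt hDge)
        _ = 4 * Real.sqrt m * (1 - x) ^ (-(1/2) : ℝ) := by
            rw [Real.sqrt_div (by linarith : (0:ℝ) ≤ 1-x), div_div_eq_mul_div,
              sqrt2_sqrt2m m (by omega),
              Real.rpow_neg (by linarith : (0:ℝ) ≤ 1-x), ← Real.sqrt_eq_rpow,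
              div_eq_mul_inv]
  · -- integrability of the bound
    have h := (intervalIntegral.intervalIntegrable_rpow' (a := 0) (b := 1)
      (by norm_num : (-1:ℝ) < -(1/2))).comp_sub_left 1
    norm_num at h
    exact (h.symm.const_mul _)
  · -- pointwise limit
    apply ae_of_all
    intro x hx
    rw [uIoc_of_le (by norm_num : (0:ℝ) ≤ 1)] at hx
    obtain ⟨hx0, hx1⟩ := hx
    rcases eq_or_lt_of_le hx1 with h1 | h1
    · subst h1
      have hf1 : auxf m 1 = 0 := by
        simp [auxf]
      have hG1 : (fun A : ℝ => auxG m A 1) = fun _ => (0:ℝ) := by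
        funext A
        simp [auxG]
      rw [hf1, hG1]
      exact tendsto_const_nhds
    · have hc : (0:ℝ) < (1 - x^(2*m))/(2*(m:ℝ)) := by
        have := pow_lt_one₀ hx0.le h1 (show 2*m ≠ 0 by omega)
        apply div_pos (by linarith) (by positivity)
      have t1 : Tendsto (fun A : ℝ => (1-x^2)/(2*A^(2*m-2))) atTop (𝓝 0) :=
        Tendsto.div_atTop tendsto_const_nhds
          ((tendsto_pow_atTop (by omega : 2*m-2 ≠ 0)).const_mul_atTop two_pos)
      have t2 : Tendsto (fun A : ℝ => (1-x^2)/(2*A^(2*m-2)) + (1-x^(2*m))/(2*(m:ℝ)))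
          atTop (𝓝 ((1-x^(2*m))/(2*(m:ℝ)))) := by
        simpa using t1.add tendsto_const_nhds
      have t3 : Tendsto (fun A : ℝ => Real.sqrt ((1-x^2)/(2*A^(2*m-2)) + (1-x^(2*m))/(2*(m:ℝ))))
          atTop (𝓝 (Real.sqrt ((1-x^(2*m))/(2*(m:ℝ))))) :=
        (Real.continuous_sqrt.tendsto _).comp t2
      have t4 := Tendsto.div (tendsto_const_nhds (x := 2 * Real.sqrt 2)) t3
        (Real.sqrt_ne_zero'.mpr hc)
      exact t4

lemma aux_value (m : ℕ) (hm : 2 ≤ m) (B : ℝ → ℝ → ℝ)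
    (hB : ∀ p q : ℝ, B p q = Real.Gamma p * Real.Gamma q / Real.Gamma (p + q)) :
    ∫ s in (0:ℝ)..1, auxf m s
      = 2 * B (1 / (2 * (m : ℝ))) (1 / 2) / Real.sqrt (m : ℝ) := by
  have hmR : (0:ℝ) < (m:ℝ) := by positivity
  have hc : ((2*m:ℕ):ℝ) = 2*(m:ℝ) := by push_cast; ring
  have hstep1 : ∫ s in (0:ℝ)..1, auxf m s
      = 4 * Real.sqrt m * ∫ s in (0:ℝ)..1, 1 / Real.sqrt (1 - s^(2*m)) := by
    rw [← intervalIntegral.integral_const_mul]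
    apply intervalIntegral.integral_congr
    intro x hx
    rw [uIcc_of_le (by norm_num : (0:ℝ) ≤ 1)] at hx
    have h1x : (0:ℝ) ≤ 1 - x^(2*m) := by
      have := pow_le_one₀ hx.1 hx.2 (n := 2*m); linarith
    show auxf m x = _
    rw [auxf, Real.sqrt_div h1x, div_div_eq_mul_div, sqrt2_sqrt2m m (by omega)]
    simp [mul_one_div, div_eq_mul_inv]
  have hs := subst_lemma_aux (2*m) (by omega)
  have hb := real_beta_aux (1/((2*m:ℕ):ℝ)) (1/2) (by positivity) (by norm_num)
  have hBval : B (1 / (2 * (m : ℝ))) (1/2)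
      = ((2*m:ℕ):ℝ) * ∫ s in (0:ℝ)..1, 1 / Real.sqrt (1 - s^(2*m)) := by
    rw [hB, show (1:ℝ)/(2*(m:ℝ)) = 1/((2*m:ℕ):ℝ) by rw [hc], ← hb, hs]
  have hsm : Real.sqrt m * Real.sqrt m = (m:ℝ) := Real.mul_self_sqrt hmR.le
  have hsm0 : Real.sqrt (m:ℝ) ≠ 0 := ne_of_gt (Real.sqrt_pos.mpr hmR)
  rw [hstep1, hBval, hc]
  set I : ℝ := ∫ s in (0:ℝ)..1, 1 / Real.sqrt (1 - s^(2*m))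
  field_simp
  linear_combination (4 * I) * hsm

/-- Behavior at infinity of the period function of `ẋ = −y, ẏ = x + x^(2m−1)`:
`lim_{A→∞} A^(m−1) T(A) = 2 B(1/(2m), 1/2) / √m`, where `B` is the Euler Beta function. -/
theorem period_function_at_infinity (m : ℕ) (hm : 2 ≤ m)
    (F T : ℝ → ℝ)
    (hF : ∀ x : ℝ, F x = x ^ 2 / 2 + x ^ (2 * m) / (2 * m))
    (hT : ∀ A : ℝ, T A = 2 * Real.sqrt 2 * ∫ x in (0:ℝ)..A, 1 / Real.sqrt (F A - F x))
    (B : ℝ → ℝ → ℝ)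
    (hB : ∀ p q : ℝ, B p q = Real.Gamma p * Real.Gamma q / Real.Gamma (p + q)) :
    Tendsto (fun A : ℝ => A ^ (m - 1) * T A) atTop
      (nhds (2 * B (1 / (2 * (m : ℝ))) (1 / 2) / Real.sqrt (m : ℝ))) := by
  have heq : (fun A : ℝ => A ^ (m - 1) * T A)
      =ᶠ[atTop] (fun A : ℝ => ∫ s in (0:ℝ)..1, auxG m A s) := by
    filter_upwards [eventually_ge_atTop (1:ℝ)] with A hA
    rw [hT]
    exact aux_eq m hm F hF A hA
  have := (aux_conv m hm).congr' heq.symm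
  rwa [aux_value m hm B hB] at this
end

section
/- Let m ≥ 2 be an integer and define T₁(A) = 2^m π / √( ((2m−1)!/((m−1)!·m!)) A^{2m−2} + 2^{2m−2} ) for A ≥ 0. Then: (a) T₁ is strictly decreasing on (0, ∞); (b) as A → 0⁺, T₁(A) = 2π(1 − c A^{2m−2} + (3/2) c² A^{4m−4}) + O(A^{6m−6}), where c = (2m−1)!!/(2m)!!; (c) lim_{A → ∞} A^{m−1} T₁(A) = 2^m π / √((2m−1)!/((m−1)!·m!)). -/
open Real Set Filter

lemma cubic_approx (u : ℝ) (hu0 : 0 ≤ u) (hu1 : u ≤ 1) :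
    |1 / Real.sqrt (1 + u) - (1 - u / 2 + 3 / 8 * u ^ 2)| ≤ u ^ 3 := by
  have h1 : (0:ℝ) < 1 + u := by linarith
  obtain ⟨s, hsdef⟩ : ∃ s, Real.sqrt (1+u) = s := ⟨_, rfl⟩
  obtain ⟨p, hp⟩ : ∃ p, (1:ℝ) - u/2 + 3/8*u^2 = p := ⟨_, rfl⟩
  have hs2 : s ^ 2 = 1 + u := by rw [← hsdef]; exact Real.sq_sqrt h1.le
  have hs1 : 1 ≤ s := by
    rw [← hsdef]
    have := Real.sqrt_le_sqrt (show (1:ℝ) ≤ 1+u by linarith)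
    simpa using this
  have hspos : (0:ℝ) < s := by linarith
  have hppos : 0 < p := by nlinarith [sq_nonneg u]
  have hsq : (p*s)^2 = 1 + u^3*(40 - 15*u + 9*u^2)/64 := by
    rw [mul_pow, hs2, ← hp]; ring
  have hcube : 0 ≤ u^3*(40 - 15*u + 9*u^2) :=
    mul_nonneg (pow_nonneg hu0 3) (by nlinarith)
  have hps : 1 ≤ p * s := by nlinarith [mul_pos hppos hspos]
  have hupper : 1/s - p ≤ 0 := by
    rw [div_sub' hspos.ne', div_nonpos_iff]
    right
    exact ⟨by linarith, hspos.le⟩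
  have hlower : p - 1/s ≤ u^3 := by
    have key : p*s - 1 ≤ u^3 * s := by
      nlinarith [sq_nonneg (p*s-1), mul_nonneg (pow_nonneg hu0 3) (sub_nonneg.2 hs1),
        mul_nonneg (pow_nonneg hu0 3) hu0, mul_nonneg (mul_nonneg (pow_nonneg hu0 3) hu0) hu0]
    have heq : p - 1/s = (p*s - 1)/s := by field_simp
    rw [heq, div_le_iff₀ hspos]
    nlinarith
  rw [hsdef, show (1:ℝ) - u / 2 + 3 / 8 * u ^ 2 = p from hp, abs_le]
  exact ⟨by linarith, by nlinarith [pow_nonneg hu0 3]⟩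

lemma key_fact_id (m : ℕ) (hm : 2 ≤ m) :
    (Nat.factorial (2*m-1) : ℝ) / ((Nat.factorial (m-1) : ℝ) * (Nat.factorial m : ℝ))
      = 2 * ((Nat.doubleFactorial (2*m-1) : ℝ) / (Nat.doubleFactorial (2*m) : ℝ)) * 4^(m-1) := by
  have h1 : Nat.factorial (2*m-1)
      = Nat.doubleFactorial (2*m-1) * (2^(m-1) * Nat.factorial (m-1)) := by
    have e1 : 2*m-1 = (2*m-2) + 1 := by omega
    have e2 : 2*m-2 = 2*(m-1) := by omega
    rw [e1, Nat.factorial_eq_mul_doubleFactorial, ← e1, e2, Nat.doubleFactorial_two_mul]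
  have h2 : Nat.doubleFactorial (2*m) = 2^m * Nat.factorial m := Nat.doubleFactorial_two_mul m
  have hfm : (0:ℝ) < Nat.factorial m := by exact_mod_cast Nat.factorial_pos m
  have hfm1 : (0:ℝ) < Nat.factorial (m-1) := by exact_mod_cast Nat.factorial_pos (m-1)
  have hdf : (0:ℝ) < Nat.doubleFactorial (2*m-1) := by
    exact_mod_cast Nat.doubleFactorial_pos (2*m-1)
  rw [h1, h2]
  push_cast
  have h4 : (4:ℝ)^(m-1) = 2^(m-1) * 2^(m-1) := by rw [← mul_pow]; norm_num
  have h2m : (2:ℝ)^m = 2 * 2^(m-1) := by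
    conv_lhs => rw [show m = (m-1)+1 by omega]
    rw [pow_succ]; ring
  rw [h4, h2m]
  field_simp

/-- Properties of the first-order harmonic balance approximation
`T₁(A) = 2^m π / √(((2m−1)!/((m−1)!·m!)) A^(2m−2) + 2^(2m−2))` of the period function
of `ẋ = −y, ẏ = x + x^(2m−1)`: it is strictly decreasing on `(0,∞)`, its Taylor
expansion at `0` is `2π(1 − c A^(2m−2) + (3/2)c² A^(4m−4)) + O(A^(6m−6))` with
`c = (2m−1)!!/(2m)!!`, and `lim_{A→∞} A^(m−1) T₁(A) = 2^m π/√((2m−1)!/((m−1)!·m!))`. -/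
theorem first_order_HBM_period (m : ℕ) (hm : 2 ≤ m)
    (T₁ : ℝ → ℝ)
    (hT₁ : ∀ A : ℝ, T₁ A = 2 ^ m * π / Real.sqrt
        ((Nat.factorial (2 * m - 1) : ℝ) / ((Nat.factorial (m - 1) : ℝ) * (Nat.factorial m : ℝ))
            * A ^ (2 * m - 2) + 2 ^ (2 * m - 2)))
    (c : ℝ)
    (hc : c = (Nat.doubleFactorial (2 * m - 1) : ℝ) / (Nat.doubleFactorial (2 * m) : ℝ)) :
    StrictAntiOn T₁ (Set.Ioi (0 : ℝ))
    ∧ (∃ C > (0 : ℝ), ∃ δ > (0 : ℝ), ∀ A : ℝ, 0 < A → A < δ →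
        |T₁ A - 2 * π * (1 - c * A ^ (2 * m - 2) + (3 / 2) * c ^ 2 * A ^ (4 * m - 4))|
          ≤ C * A ^ (6 * m - 6))
    ∧ Tendsto (fun A : ℝ => A ^ (m - 1) * T₁ A) atTop
        (nhds (2 ^ m * π / Real.sqrt
          ((Nat.factorial (2 * m - 1) : ℝ)
            / ((Nat.factorial (m - 1) : ℝ) * (Nat.factorial m : ℝ))))) := by
  set K : ℝ := (Nat.factorial (2 * m - 1) : ℝ)
      / ((Nat.factorial (m - 1) : ℝ) * (Nat.factorial m : ℝ)) with hKdef
  have hfm : (0:ℝ) < Nat.factorial m := by exact_mod_cast Nat.factorial_pos m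
  have hfm1 : (0:ℝ) < Nat.factorial (m-1) := by exact_mod_cast Nat.factorial_pos (m-1)
  have hf2m : (0:ℝ) < Nat.factorial (2*m-1) := by exact_mod_cast Nat.factorial_pos (2*m-1)
  have hKpos : 0 < K := by
    rw [hKdef]; exact div_pos hf2m (mul_pos hfm1 hfm)
  have hn0 : 2*m-2 ≠ 0 := by omega
  have hc0 : 0 < c := by
    rw [hc]
    have h1 : (0:ℝ) < Nat.doubleFactorial (2*m-1) := by
      exact_mod_cast Nat.doubleFactorial_pos (2*m-1)
    have h2 : (0:ℝ) < Nat.doubleFactorial (2*m) := by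
      exact_mod_cast Nat.doubleFactorial_pos (2*m)
    exact div_pos h1 h2
  have hKc : K = 2*c*4^(m-1) := by rw [hKdef, hc]; exact key_fact_id m hm
  have h2pow : (2:ℝ)^(2*m-2) = 4^(m-1) := by
    rw [show 2*m-2 = 2*(m-1) by omega, pow_mul]; norm_num
  have h4sq : (4:ℝ)^(m-1) = (2^(m-1))^2 := by rw [← pow_mul, show (m-1)*2 = 2*(m-1) by ring, pow_mul]; norm_num
  have h2m : (2:ℝ)^m = 2 * 2^(m-1) := by
    conv_lhs => rw [show m = (m-1)+1 by omega]
    rw [pow_succ]; ring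
  refine ⟨?_, ?_, ?_⟩
  · -- strictly decreasing
    intro a ha b hb hab
    rw [hT₁ a, hT₁ b]
    have hargb : 0 < K * b^(2*m-2) + 2^(2*m-2) := by
      have := mul_pos hKpos (pow_pos (lt_trans (mem_Ioi.mp ha) hab) (2*m-2))
      positivity
    have harga : 0 < K * a^(2*m-2) + 2^(2*m-2) := by
      have := mul_pos hKpos (pow_pos (mem_Ioi.mp ha) (2*m-2))
      positivity
    apply div_lt_div_of_pos_left (by positivity) (Real.sqrt_pos.2 harga)
    apply Real.sqrt_lt_sqrt harga.le
    have : a^(2*m-2) < b^(2*m-2) := pow_lt_pow_left₀ hab (le_of_lt (mem_Ioi.mp ha)) hn0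
    nlinarith [hKpos]
  · -- Taylor expansion at 0
    refine ⟨16*π*c^3, by positivity, min 1 (1/(2*c)), lt_min one_pos (by positivity), ?_⟩
    intro A hA hAδ
    have hA1 : A < 1 := lt_of_lt_of_le hAδ (min_le_left _ _)
    have hAc : A < 1/(2*c) := lt_of_lt_of_le hAδ (min_le_right _ _)
    have hu0 : 0 ≤ 2*c*A^(2*m-2) := by positivity
    have hu1 : 2*c*A^(2*m-2) ≤ 1 := by
      have h1 : A^(2*m-2) ≤ A := pow_le_of_le_one hA.le hA1.le hn0
      have h2 : A * (2*c) < 1 := (lt_div_iff₀ (by positivity)).1 hAc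
      nlinarith
    have hargpos : (0:ℝ) < 1 + 2*c*A^(2*m-2) := by linarith
    have hsp : 0 < Real.sqrt (1 + 2*c*A^(2*m-2)) := Real.sqrt_pos.2 hargpos
    have harg : K * A^(2*m-2) + 2^(2*m-2) = 4^(m-1) * (1 + 2*c*A^(2*m-2)) := by
      rw [hKc, h2pow]; ring
    have hsqrt4 : Real.sqrt ((4:ℝ)^(m-1)) = 2^(m-1) := by
      rw [h4sq, Real.sqrt_sq (by positivity)]
    have hTA : T₁ A = 2*π * (1/Real.sqrt (1 + 2*c*A^(2*m-2))) := by
      rw [hT₁ A, harg, Real.sqrt_mul (by positivity), hsqrt4, h2m]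
      field_simp
    have hpoly : 2*π*(1 - c*A^(2*m-2) + 3/2*c^2*A^(4*m-4))
        = 2*π*(1 - (2*c*A^(2*m-2))/2 + 3/8*(2*c*A^(2*m-2))^2) := by
      rw [show 4*m-4 = (2*m-2)*2 by omega, pow_mul]; ring
    calc |T₁ A - 2*π*(1 - c*A^(2*m-2) + 3/2*c^2*A^(4*m-4))|
        = 2*π * |1/Real.sqrt (1 + 2*c*A^(2*m-2))
            - (1 - (2*c*A^(2*m-2))/2 + 3/8*(2*c*A^(2*m-2))^2)| := by
          rw [hTA, hpoly, ← mul_sub, abs_mul, abs_of_nonneg (by positivity : (0:ℝ) ≤ 2*π)]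
      _ ≤ 2*π * (2*c*A^(2*m-2))^3 := by
          exact mul_le_mul_of_nonneg_left (cubic_approx _ hu0 hu1) (by positivity)
      _ = 16*π*c^3 * A^(6*m-6) := by
          rw [show 6*m-6 = (2*m-2)*3 by omega, pow_mul]; ring
  · -- limit at infinity
    have hsK : 0 < Real.sqrt K := Real.sqrt_pos.2 hKpos
    have h0 : Tendsto (fun A:ℝ => (A^(2*m-2))⁻¹) atTop (nhds 0) :=
      tendsto_inv_atTop_zero.comp (tendsto_pow_atTop hn0)
    have hlim : Tendsto (fun A:ℝ => K + 2^(2*m-2) * (A^(2*m-2))⁻¹) atTop (nhds K) := by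
      have := tendsto_const_nhds (α := ℝ) (x := K) (f := atTop) |>.add
        (h0.const_mul ((2:ℝ)^(2*m-2)))
      simpa using this
    have hcont : Tendsto (fun A:ℝ => 2^m*π / Real.sqrt (K + 2^(2*m-2)*(A^(2*m-2))⁻¹))
        atTop (nhds (2^m*π/Real.sqrt K)) :=
      tendsto_const_nhds.div ((Real.continuous_sqrt.tendsto K).comp hlim) hsK.ne'
    refine Tendsto.congr' ?_ hcont
    filter_upwards [eventually_gt_atTop (0:ℝ)] with A hA
    rw [hT₁ A]
    have hAn : (0:ℝ) < A^(2*m-2) := pow_pos hA _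
    have hAm : (0:ℝ) < A^(m-1) := pow_pos hA _
    have hargpos : 0 < K + 2^(2*m-2)*(A^(2*m-2))⁻¹ := by positivity
    have hsplit : Real.sqrt (K*A^(2*m-2) + 2^(2*m-2))
        = A^(m-1) * Real.sqrt (K + 2^(2*m-2)*(A^(2*m-2))⁻¹) := by
      have h1 : K*A^(2*m-2) + 2^(2*m-2) = A^(2*m-2) * (K + 2^(2*m-2)*(A^(2*m-2))⁻¹) := by
        field_simp
      rw [h1, Real.sqrt_mul hAn.le,
        show A^(2*m-2) = (A^(m-1))^2 by rw [← pow_mul]; congr 1; omega,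
        Real.sqrt_sq hAm.le]
    rw [hsplit]
    have hsq : 0 < Real.sqrt (K + 2^(2*m-2)*(A^(2*m-2))⁻¹) := Real.sqrt_pos.2 hargpos
    field_simp
end

section
/- Let k ≠ 0 be a real number and m ≥ 1 a real number, and let F(x) = ∫₀^x s/(s² + k²)^m ds (explicitly, F(x) = (1/2)ln((x²+k²)/k²) if m = 1, and F(x) = (1/(2(m−1)))(k^{−2(m−1)} − (x²+k²)^{−(m−1)}) if m > 1). Then the period function T(A) = 2√2 ∫₀^A dx/√(F(A) − F(x)) of the system ẋ = y, ẏ = −x/(x²+k²)^m is strictly increasing on (0, ∞). -/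
open Real Set MeasureTheory intervalIntegral

section Aux

variable {k m : ℝ}

private lemma P_pos (hk : k ≠ 0) (x : ℝ) : (0:ℝ) < x ^ 2 + k ^ 2 := by positivity

private lemma cont_g (hk : k ≠ 0) :
    Continuous (fun x : ℝ => x * (x ^ 2 + k ^ 2) ^ (-m)) := by
  apply continuous_id.mul
  exact (by continuity : Continuous fun x : ℝ => x ^ 2 + k ^ 2).rpow_const
    (fun x => Or.inl (P_pos hk x).ne')

private lemma hasDerivAt_F (hk : k ≠ 0) {F : ℝ → ℝ}
    (hF : ∀ x : ℝ, F x = ∫ s in (0:ℝ)..x, s / (s ^ 2 + k ^ 2) ^ m) (x : ℝ) :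
    HasDerivAt F (x * (x ^ 2 + k ^ 2) ^ (-m)) x := by
  have hgeq : (fun s : ℝ => s / (s ^ 2 + k ^ 2) ^ m)
      = fun s => s * (s ^ 2 + k ^ 2) ^ (-m) := by
    funext s
    rw [Real.rpow_neg (P_pos hk s).le, div_eq_mul_inv]
  have hc : Continuous (fun s : ℝ => s / (s ^ 2 + k ^ 2) ^ m) := by
    rw [hgeq]; exact cont_g hk
  have hFe : F = fun u => ∫ s in (0:ℝ)..u, s / (s ^ 2 + k ^ 2) ^ m := funext hF
  have h := intervalIntegral.integral_hasDerivAt_right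
    (hc.intervalIntegrable 0 x) (hc.stronglyMeasurableAtFilter _ _) hc.continuousAt
  rw [hFe, show x * (x ^ 2 + k ^ 2) ^ (-m) = x / (x ^ 2 + k ^ 2) ^ m by
    rw [Real.rpow_neg (P_pos hk x).le, div_eq_mul_inv]]
  exact h

private lemma hasDerivAt_phi (hk : k ≠ 0) {F : ℝ → ℝ}
    (hF' : ∀ x : ℝ, HasDerivAt F (x * (x ^ 2 + k ^ 2) ^ (-m)) x) (x : ℝ) :
    HasDerivAt (fun x => x * (x * (x ^ 2 + k ^ 2) ^ (-m)) - 2 * F x)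
      (-(2 * m * x ^ 3 * (x ^ 2 + k ^ 2) ^ (-m - 1))) x := by
  have hP : (0:ℝ) < x ^ 2 + k ^ 2 := P_pos hk x
  have hb : HasDerivAt (fun x : ℝ => x ^ 2 + k ^ 2) (2 * x) x := by
    simpa using (hasDerivAt_pow 2 x).add_const (k ^ 2)
  have h1 : HasDerivAt (fun x : ℝ => (x ^ 2 + k ^ 2) ^ (-m))
      (2 * x * (-m) * (x ^ 2 + k ^ 2) ^ (-m - 1)) x := by
    simpa using hb.rpow_const (p := -m) (Or.inl hP.ne')
  have h2 : HasDerivAt (fun x : ℝ => x * (x ^ 2 + k ^ 2) ^ (-m))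
      (1 * (x ^ 2 + k ^ 2) ^ (-m) + x * (2 * x * (-m) * (x ^ 2 + k ^ 2) ^ (-m - 1))) x :=
    (hasDerivAt_id x).mul h1
  have h3 := ((hasDerivAt_id x).mul h2).sub ((hF' x).const_mul 2)
  refine h3.congr_deriv ?_
  have hPm := Real.rpow_add_one hP.ne' (-m - 1)
  rw [show (-m - 1 + 1 : ℝ) = -m from by ring] at hPm
  rw [hPm]; simp only [id_eq]; ring

private lemma phi_anti (hk : k ≠ 0) (hm : 1 ≤ m) {F : ℝ → ℝ}
    (hF' : ∀ x : ℝ, HasDerivAt F (x * (x ^ 2 + k ^ 2) ^ (-m)) x) :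
    StrictAntiOn (fun x => x * (x * (x ^ 2 + k ^ 2) ^ (-m)) - 2 * F x) (Ioi (0:ℝ)) := by
  apply strictAntiOn_of_deriv_neg (convex_Ioi 0)
  · exact fun x _ => ((hasDerivAt_phi hk hF' x).differentiableAt.continuousAt).continuousWithinAt
  · intro x hx
    rw [interior_Ioi] at hx
    rw [(hasDerivAt_phi hk hF' x).deriv]
    have hP : (0:ℝ) < (x ^ 2 + k ^ 2) ^ (-m - 1) := Real.rpow_pos_of_pos (P_pos hk x) _
    have hx3 : (0:ℝ) < x ^ 3 := pow_pos hx 3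
    have h5 : (0:ℝ) < 2 * m * x ^ 3 * (x ^ 2 + k ^ 2) ^ (-m - 1) := by
      apply mul_pos (mul_pos (mul_pos (by norm_num) (by linarith)) hx3) hP
    linarith

private lemma h_anti (hk : k ≠ 0) (hm : 1 ≤ m) {F : ℝ → ℝ}
    (hF' : ∀ x : ℝ, HasDerivAt F (x * (x ^ 2 + k ^ 2) ^ (-m)) x)
    {u : ℝ} (hu0 : 0 < u) (hu1 : u < 1) :
    StrictAntiOn (fun t => (F t - F (t * u)) / t ^ 2) (Ioi (0:ℝ)) := by
  have hd : ∀ t : ℝ, 0 < t → HasDerivAt (fun t => (F t - F (t * u)) / t ^ 2)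
      (((t * (t ^ 2 + k ^ 2) ^ (-m) - t * u * ((t * u) ^ 2 + k ^ 2) ^ (-m) * u) * t ^ 2
        - (F t - F (t * u)) * (2 * t)) / (t ^ 2) ^ 2) t := by
    intro t ht
    have hinner : HasDerivAt (fun t : ℝ => F (t * u)) (t * u * ((t * u) ^ 2 + k ^ 2) ^ (-m) * u) t :=
      (hF' (t * u)).comp t (hasDerivAt_mul_const u)
    have hnum : HasDerivAt (fun t : ℝ => F t - F (t * u))
        (t * (t ^ 2 + k ^ 2) ^ (-m) - t * u * ((t * u) ^ 2 + k ^ 2) ^ (-m) * u) t :=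
      (hF' t).sub hinner
    have hden : HasDerivAt (fun t : ℝ => t ^ 2) (2 * t) t := by
      simpa using hasDerivAt_pow 2 t
    exact hnum.div hden (by positivity)
  apply strictAntiOn_of_deriv_neg (convex_Ioi 0)
  · intro t ht
    exact ((hd t ht).differentiableAt.continuousAt).continuousWithinAt
  · intro t ht
    rw [interior_Ioi] at ht
    rw [(hd t ht).deriv]
    apply div_neg_of_neg_of_pos _ (pow_pos (pow_pos ht 2) 2)
    have htu : 0 < t * u := mul_pos ht hu0
    have htut : t * u < t := by nlinarith
    have hphi := phi_anti hk hm hF' (mem_Ioi.2 htu) (mem_Ioi.2 ht) htut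
    simp only at hphi
    nlinarith [hphi]

private lemma F_strictMono (hk : k ≠ 0) {F : ℝ → ℝ}
    (hF' : ∀ x : ℝ, HasDerivAt F (x * (x ^ 2 + k ^ 2) ^ (-m)) x) :
    StrictMonoOn F (Ici (0:ℝ)) := by
  apply strictMonoOn_of_deriv_pos (convex_Ici 0)
  · exact fun x _ => ((hF' x).differentiableAt.continuousAt).continuousWithinAt
  · intro x hx
    rw [interior_Ici] at hx
    rw [(hF' x).deriv]
    exact mul_pos hx (Real.rpow_pos_of_pos (P_pos hk x) _)

/-- Lower bound: `F A - F x ≥ (A/4) (A²+k²)^{-m} (A - x)` on `[0, A]`. -/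
private lemma F_lb (hk : k ≠ 0) (hm : 1 ≤ m) {F : ℝ → ℝ}
    (hF' : ∀ x : ℝ, HasDerivAt F (x * (x ^ 2 + k ^ 2) ^ (-m)) x)
    {A : ℝ} (hA : 0 < A) {x : ℝ} (hx : x ∈ Icc 0 A) :
    A / 4 * (A ^ 2 + k ^ 2) ^ (-m) * (A - x) ≤ F A - F x := by
  set c : ℝ := A / 2 * (A ^ 2 + k ^ 2) ^ (-m) with hc
  have hPA : (0:ℝ) < (A ^ 2 + k ^ 2) ^ (-m) := Real.rpow_pos_of_pos (P_pos hk A) _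
  have hc0 : 0 < c := by positivity
  have hgint : ∀ a b : ℝ, IntervalIntegrable (fun s : ℝ => s * (s ^ 2 + k ^ 2) ^ (-m)) volume a b :=
    fun a b => (cont_g hk).intervalIntegrable a b
  have hFsub : ∀ a b : ℝ, F b - F a = ∫ s in a..b, s * (s ^ 2 + k ^ 2) ^ (-m) := by
    intro a b
    rw [intervalIntegral.integral_eq_sub_of_hasDerivAt (fun s _ => hF' s) (hgint a b)]
  -- bound on [A/2, A]
  have key : ∀ y : ℝ, y ∈ Icc (A/2) A → c * (A - y) ≤ F A - F y := by
    intro y hy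
    rw [hFsub y A]
    have hle : ∀ s ∈ Icc y A, c ≤ s * (s ^ 2 + k ^ 2) ^ (-m) := by
      intro s hs
      have hs1 : A / 2 ≤ s := le_trans hy.1 hs.1
      have hs2 : s ≤ A := hs.2
      have hP : (A ^ 2 + k ^ 2) ^ (-m) ≤ (s ^ 2 + k ^ 2) ^ (-m) := by
        apply Real.rpow_le_rpow_of_nonpos (P_pos hk s) _ (by linarith)
        have : s ^ 2 ≤ A ^ 2 := by nlinarith
        linarith
      calc c = A / 2 * (A ^ 2 + k ^ 2) ^ (-m) := hc
        _ ≤ s * (s ^ 2 + k ^ 2) ^ (-m) := by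
            apply mul_le_mul hs1 hP hPA.le (by linarith)
    have := intervalIntegral.integral_mono_on (μ := volume) hy.2
      (_root_.intervalIntegrable_const (c := c)) (hgint y A) hle
    rw [intervalIntegral.integral_const, smul_eq_mul] at this
    linarith [this]
  rcases le_or_gt (A/2) x with h | h
  · have := key x ⟨h, hx.2⟩
    nlinarith [hc0, sub_nonneg.2 hx.2]
  · -- x < A/2
    have h1 : c * (A - A/2) ≤ F A - F (A/2) := key (A/2) ⟨le_refl _, by linarith⟩
    have h2 : F x ≤ F (A/2) :=
      (F_strictMono hk hF').monotoneOn (mem_Ici.2 hx.1) (mem_Ici.2 (by linarith)) h.le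
    have h3 : A - x ≤ A := by linarith [hx.1]
    nlinarith [hPA]

private lemma integrable_one_div_sqrt (hk : k ≠ 0) (hm : 1 ≤ m) {F : ℝ → ℝ}
    (hF' : ∀ x : ℝ, HasDerivAt F (x * (x ^ 2 + k ^ 2) ^ (-m)) x)
    {A : ℝ} (hA : 0 < A) :
    IntervalIntegrable (fun x => 1 / Real.sqrt (F A - F x)) volume 0 A := by
  set c : ℝ := A / 4 * (A ^ 2 + k ^ 2) ^ (-m) with hc
  have hc0 : 0 < c := by
    have := Real.rpow_pos_of_pos (P_pos hk A) (-m); positivity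
  have hmaj : IntervalIntegrable (fun x => (Real.sqrt c)⁻¹ * (A - x) ^ (-(1:ℝ)/2)) volume 0 A := by
    have h0 : IntervalIntegrable (fun x : ℝ => x ^ (-(1:ℝ)/2)) volume 0 A :=
      intervalIntegral.intervalIntegrable_rpow' (by norm_num)
    have h1 := (h0.comp_sub_left A).symm
    simp only [sub_zero, sub_self] at h1
    exact h1.const_mul _
  apply hmaj.mono_fun
  · apply Measurable.aestronglyMeasurable
    have hcF : Continuous F := by
      rw [continuous_iff_continuousAt]; exact fun x => (hF' x).continuousAt
    exact (measurable_const.div ((continuous_const.sub hcF).sqrt.measurable))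
  · rw [uIoc_of_le hA.le]
    filter_upwards [ae_restrict_mem measurableSet_Ioc] with x hx
    have hx0 : 0 ≤ x := hx.1.le
    have hxA : x ≤ A := hx.2
    have hlb : c * (A - x) ≤ F A - F x := by
      have := F_lb hk hm hF' hA (x := x) ⟨hx0, hxA⟩
      rw [← hc] at this
      linarith
    have hFnn : 0 ≤ F A - F x := le_trans (by nlinarith) hlb
    simp only [Real.norm_eq_abs]
    rw [abs_of_nonneg (by positivity : (0:ℝ) ≤ 1 / Real.sqrt (F A - F x)),
      abs_of_nonneg]
    · rcases eq_or_lt_of_le hxA with rfl | hlt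
      · simp
      · have hAx : 0 < A - x := by linarith
        have hs1 : Real.sqrt c * Real.sqrt (A - x) ≤ Real.sqrt (F A - F x) := by
          rw [← Real.sqrt_mul hc0.le]
          exact Real.sqrt_le_sqrt hlb
        have hs2 : 0 < Real.sqrt c * Real.sqrt (A - x) := by
          apply mul_pos (Real.sqrt_pos.2 hc0) (Real.sqrt_pos.2 hAx)
        have h3 : 1 / Real.sqrt (F A - F x) ≤ 1 / (Real.sqrt c * Real.sqrt (A - x)) :=
          one_div_le_one_div_of_le hs2 hs1
        calc 1 / Real.sqrt (F A - F x) ≤ 1 / (Real.sqrt c * Real.sqrt (A - x)) := h3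
          _ = (Real.sqrt c)⁻¹ * (A - x) ^ (-(1:ℝ)/2) := by
              rw [one_div, mul_inv]
              congr 1
              rw [show (-(1:ℝ)/2) = -(1/2) from by ring,
                Real.rpow_neg hAx.le, ← Real.sqrt_eq_rpow]
    · exact mul_nonneg (inv_nonneg.2 (Real.sqrt_nonneg _)) (Real.rpow_nonneg (by linarith) _)

end Aux

/-- For `k ≠ 0`, `m ≥ 1`, and the potential `F(x) = ∫₀^x s/(s²+k²)^m ds`, the period
function `T(A) = 2√2 ∫₀^A dx/√(F(A) − F(x))` of `ẋ = y, ẏ = −x/(x²+k²)^m` is strictly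
increasing on `(0, ∞)`. -/
theorem period_function_strictMono (k : ℝ) (hk : k ≠ 0) (m : ℝ) (hm : 1 ≤ m)
    (F T : ℝ → ℝ)
    (hF : ∀ x : ℝ, F x = ∫ s in (0:ℝ)..x, s / (s ^ 2 + k ^ 2) ^ m)
    (hT : ∀ A : ℝ, T A = 2 * Real.sqrt 2 * ∫ x in (0:ℝ)..A, 1 / Real.sqrt (F A - F x)) :
    StrictMonoOn T (Set.Ioi (0 : ℝ)) := by
  have hF' : ∀ x : ℝ, HasDerivAt F (x * (x ^ 2 + k ^ 2) ^ (-m)) x := hasDerivAt_F hk hF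
  intro A hA B hB hAB
  rw [mem_Ioi] at hA hB
  rw [hT A, hT B]
  have h2s : (0:ℝ) < 2 * Real.sqrt 2 := by positivity
  apply mul_lt_mul_of_pos_left _ h2s
  set c : ℝ := A / B with hcdef
  have hc0 : 0 < c := div_pos hA hB
  have hc1 : c < 1 := (div_lt_one hB).2 hAB
  have hBc : B * c = A := by rw [hcdef]; field_simp
  have hAc : A / c = B := by rw [hcdef]; field_simp
  have hIA : IntervalIntegrable (fun x => 1 / Real.sqrt (F A - F x)) volume 0 A :=
    integrable_one_div_sqrt hk hm hF' hA
  have hIB : IntervalIntegrable (fun x => 1 / Real.sqrt (F B - F x)) volume 0 B :=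
    integrable_one_div_sqrt hk hm hF' hB
  have hIA2 : IntervalIntegrable (fun y => 1 / Real.sqrt (F A - F (y * c))) volume 0 B := by
    have := hIA.comp_mul_right (c := c)
    rwa [zero_div, hAc] at this
  have hsub : (∫ x in (0:ℝ)..A, 1 / Real.sqrt (F A - F x))
      = c * ∫ y in (0:ℝ)..B, 1 / Real.sqrt (F A - F (y * c)) := by
    have h := intervalIntegral.integral_comp_mul_right (a := (0:ℝ)) (b := B)
      (fun x => 1 / Real.sqrt (F A - F x)) hc0.ne'
    rw [zero_mul, hBc, smul_eq_mul] at h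
    rw [h, ← mul_assoc, mul_inv_cancel₀ hc0.ne', one_mul]
  rw [hsub]
  have hpos : 0 < ∫ y in (0:ℝ)..B,
      (1 / Real.sqrt (F B - F y) - c * (1 / Real.sqrt (F A - F (y * c)))) := by
    apply intervalIntegral_pos_of_pos_on (hIB.sub (hIA2.const_mul c)) _ (lt_trans hA hAB)
    intro y hy
    obtain ⟨hy0, hyB⟩ := hy
    set u : ℝ := y / B with hudef
    have hu0 : 0 < u := div_pos hy0 hB
    have hu1 : u < 1 := (div_lt_one hB).2 hyB
    have hBu : B * u = y := by rw [hudef]; field_simp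
    have hyA : y * c = A * u := by rw [hudef, hcdef]; field_simp
    have hh : (F B - F (B * u)) / B ^ 2 < (F A - F (A * u)) / A ^ 2 :=
      h_anti hk hm hF' hu0 hu1 (mem_Ioi.2 hA) (mem_Ioi.2 hB) hAB
    rw [hBu] at hh
    have hAu0 : 0 < A * u := mul_pos hA hu0
    have hAuA : A * u < A := by nlinarith
    have hDA : 0 < F A - F (A * u) := sub_pos.2 <|
      F_strictMono hk hF' (mem_Ici.2 hAu0.le) (mem_Ici.2 hA.le) hAuA
    have hDB : 0 < F B - F y := sub_pos.2 <|
      F_strictMono hk hF' (mem_Ici.2 hy0.le) (mem_Ici.2 hB.le) hyB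
    have hkey : c ^ 2 * (F B - F y) < F A - F (A * u) := by
      have h1 := mul_lt_mul_of_pos_left hh (show (0:ℝ) < A ^ 2 by positivity)
      have e1 : A ^ 2 * ((F A - F (A * u)) / A ^ 2) = F A - F (A * u) := by
        field_simp
      have e2 : A ^ 2 * ((F B - F y) / B ^ 2) = c ^ 2 * (F B - F y) := by
        rw [hcdef]; field_simp
      rw [e1, e2] at h1
      exact h1
    have hsA : 0 < Real.sqrt (F A - F (A * u)) := Real.sqrt_pos.2 hDA
    have hsB : 0 < Real.sqrt (F B - F y) := Real.sqrt_pos.2 hDB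
    have h2 : c * Real.sqrt (F B - F y) < Real.sqrt (F A - F (A * u)) := by
      have h3 := Real.sqrt_lt_sqrt (by positivity) hkey
      rwa [Real.sqrt_mul (sq_nonneg c), Real.sqrt_sq hc0.le] at h3
    rw [hyA]
    rw [sub_pos, mul_one_div, div_lt_div_iff₀ hsA hsB]
    linarith
  have hsplit := intervalIntegral.integral_sub hIB (hIA2.const_mul c)
  rw [hsplit] at hpos
  have hcm : (∫ y in (0:ℝ)..B, c * (1 / Real.sqrt (F A - F (y * c))))
      = c * ∫ y in (0:ℝ)..B, 1 / Real.sqrt (F A - F (y * c)) :=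
    intervalIntegral.integral_const_mul _ _
  rw [hcm] at hpos
  linarith
end

section
/- For every real x, x² + (x² − 1)·ln(x² + 1) ≥ 0, with equality only at x = 0. -/
open Real

lemma aux_pos {t : ℝ} (ht : 0 < t) : 0 < t + (t - 1) * Real.log (t + 1) := by
  have hlog0 : 0 < Real.log (t + 1) := Real.log_pos (by linarith)
  rcases le_or_gt t 1 with h | h
  · have hle : Real.log (t + 1) ≤ t := by
      have := Real.log_le_sub_one_of_pos (show (0:ℝ) < t + 1 by linarith)
      linarith
    have : (t - 1) * Real.log (t + 1) ≥ (t - 1) * t := by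
      apply mul_le_mul_of_nonpos_left hle (by linarith)
    nlinarith
  · nlinarith

/-- For every real `x`, `x² + (x² − 1)·ln(x² + 1) ≥ 0`, with equality only at `x = 0`. -/
theorem log_inequality :
    ∀ x : ℝ, 0 ≤ x ^ 2 + (x ^ 2 - 1) * Real.log (x ^ 2 + 1)
      ∧ (x ^ 2 + (x ^ 2 - 1) * Real.log (x ^ 2 + 1) = 0 ↔ x = 0) := by
  intro x
  rcases eq_or_ne x 0 with rfl | hx
  · simp
  · have ht : 0 < x ^ 2 := by positivity
    have h := aux_pos ht
    constructor
    · linarith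
    · constructor
      · intro h0; linarith
      · intro h0; exact absurd h0 hx
end

section
/- For every real m > 1 and every real w ≥ 1, (2m−1)·w^m − 2m·w^{m−1} − m·w + m + 1 ≥ 0, with equality at w = 1. -/
open Real

/-- For every real `m > 1` and `w ≥ 1`:
`(2m−1)·w^m − 2m·w^(m−1) − m·w + m + 1 ≥ 0`, with equality at `w = 1`. -/
theorem rpow_numerator_nonneg (m : ℝ) (hm : 1 < m) :
    (∀ w : ℝ, 1 ≤ w →
      0 ≤ (2 * m - 1) * w ^ m - 2 * m * w ^ (m - 1) - m * w + m + 1)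
    ∧ (2 * m - 1) * (1 : ℝ) ^ m - 2 * m * (1 : ℝ) ^ (m - 1) - m * 1 + m + 1 = 0 := by
  set f : ℝ → ℝ := fun w => (2 * m - 1) * w ^ m - 2 * m * w ^ (m - 1) - m * w + m + 1
    with hf
  have hf1 : f 1 = 0 := by simp [hf]
  have hderiv : ∀ w : ℝ, 0 < w → HasDerivAt f
      ((2 * m - 1) * (m * w ^ (m - 1)) - 2 * m * ((m - 1) * w ^ (m - 1 - 1)) - m) w := by
    intro w hw0
    have h1 : HasDerivAt (fun w : ℝ => w ^ m) (m * w ^ (m - 1)) w :=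
      Real.hasDerivAt_rpow_const (Or.inl hw0.ne')
    have h2 : HasDerivAt (fun w : ℝ => w ^ (m - 1)) ((m - 1) * w ^ (m - 1 - 1)) w :=
      Real.hasDerivAt_rpow_const (Or.inl hw0.ne')
    have hid : HasDerivAt (fun w : ℝ => m * w) m w := by
      simpa using (hasDerivAt_id w).const_mul m
    have := (((h1.const_mul (2 * m - 1)).sub (h2.const_mul (2 * m))).sub hid).add_const (m + 1)
    have heq : f = fun x : ℝ => (2 * m - 1) * x ^ m - 2 * m * x ^ (m - 1) - m * x + (m + 1) := by
      funext x; ring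
    rw [heq]; exact this
  have hmono : MonotoneOn f (Set.Ici (1 : ℝ)) := by
    apply monotoneOn_of_deriv_nonneg (convex_Ici 1)
    · intro w hw
      exact (hderiv w (lt_of_lt_of_le one_pos hw)).continuousAt.continuousWithinAt
    · intro w hw
      rw [interior_Ici] at hw
      exact (hderiv w (lt_trans one_pos hw)).differentiableAt.differentiableWithinAt
    · intro w hw
      rw [interior_Ici] at hw
      have hw1 : (1 : ℝ) ≤ w := le_of_lt hw
      have hw0 : (0 : ℝ) < w := lt_trans one_pos hw
      rw [(hderiv w hw0).deriv]
      have hab : w ^ (m - 1 - 1) ≤ w ^ (m - 1) :=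
        Real.rpow_le_rpow_of_exponent_le hw1 (by linarith)
      have ha1 : (1 : ℝ) ≤ w ^ (m - 1) := by
        have := Real.rpow_le_rpow_of_exponent_le hw1 (show (0:ℝ) ≤ m - 1 by linarith)
        simpa using this
      have hb0 : 0 < w ^ (m - 1 - 1) := Real.rpow_pos_of_pos hw0 _
      have h3 : 0 ≤ (m - 1) * (w ^ (m - 1) - w ^ (m - 1 - 1)) :=
        mul_nonneg (by linarith) (by linarith)
      nlinarith [h3, hm]
  constructor
  · intro w hw
    have := hmono (Set.self_mem_Ici) hw hw
    rw [hf1] at this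
    exact this
  · exact hf1
end

section
/- For every integer m ≥ 1 and all real numbers A and k, (1/π) ∫₀^{2π} (A² cos²θ + k²)^m cos²θ dθ = Σ_{j=0}^{m} 4^{−j} C(m, j) C(2j+1, j) k^{2(m−j)} A^{2j}, where C(n, r) is the binomial coefficient. -/
open Real Finset

lemma int_cos_even (n : ℕ) :
    ∫ θ in (0:ℝ)..(2 * π), Real.cos θ ^ (2 * n)
      = 2 * π * (Nat.centralBinom n : ℝ) / 4 ^ n := by
  induction n with
  | zero => simp [Nat.centralBinom]
  | succ n ih =>
      have h2 : 2 * (n + 1) = 2 * n + 2 := by ring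
      rw [h2, integral_cos_pow, ih]
      have hs : Real.sin (2 * π) = 0 := by simp [Real.sin_two_mul]
      have hc : (n + 1 : ℝ) * (Nat.centralBinom (n + 1) : ℝ)
          = 2 * (2 * n + 1) * (Nat.centralBinom n : ℝ) := by
        exact_mod_cast Nat.succ_mul_centralBinom_succ n
      have h4 : (4 : ℝ) ^ (n + 1) = 4 ^ n * 4 := by ring
      rw [hs, Real.sin_zero, h4]
      have hn1 : (n : ℝ) + 1 ≠ 0 := by positivity
      have h4n : (4 : ℝ) ^ n ≠ 0 := by positivity
      field_simp
      push_cast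
      linear_combination (-(4 * π)) * hc

lemma central_eq (j : ℕ) : Nat.centralBinom (j + 1) = 2 * Nat.choose (2 * j + 1) j := by
  rw [Nat.centralBinom]
  have : 2 * (j + 1) = (2 * j + 1) + 1 := by ring
  rw [this, Nat.choose_succ_succ' ]
  have hsym : Nat.choose (2 * j + 1) (j + 1) = Nat.choose (2 * j + 1) j := by
    rw [← Nat.choose_symm (by omega : j + 1 ≤ 2 * j + 1)]
    congr 1
    omega
  omega

/-- First-harmonic Fourier coefficient identity:
`(1/π) ∫₀^{2π} (A² cos²θ + k²)^m cos²θ dθ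
  = Σ_{j=0}^m 4^(−j) C(m,j) C(2j+1,j) k^(2(m−j)) A^(2j)`. -/
theorem first_harmonic_coefficient (m : ℕ) (hm : 1 ≤ m) (A k : ℝ) :
    (1 / π) * ∫ θ in (0:ℝ)..(2 * π),
        (A ^ 2 * Real.cos θ ^ 2 + k ^ 2) ^ m * Real.cos θ ^ 2
      = ∑ j ∈ Finset.range (m + 1),
          ((1 : ℝ) / 4) ^ j * (Nat.choose m j : ℝ) * (Nat.choose (2 * j + 1) j : ℝ)
            * k ^ (2 * (m - j)) * A ^ (2 * j) := by
  have hexp : ∀ θ : ℝ, (A ^ 2 * Real.cos θ ^ 2 + k ^ 2) ^ m * Real.cos θ ^ 2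
      = ∑ j ∈ Finset.range (m + 1),
          (Nat.choose m j : ℝ) * k ^ (2 * (m - j)) * A ^ (2 * j)
            * Real.cos θ ^ (2 * (j + 1)) := by
    intro θ
    rw [add_pow, Finset.sum_mul]
    refine Finset.sum_congr rfl fun j hj => ?_
    rw [Finset.mem_range] at hj
    simp only [pow_mul]
    ring
  have hInt : (∫ θ in (0:ℝ)..(2 * π),
      (A ^ 2 * Real.cos θ ^ 2 + k ^ 2) ^ m * Real.cos θ ^ 2)
      = ∑ j ∈ Finset.range (m + 1),
          (Nat.choose m j : ℝ) * k ^ (2 * (m - j)) * A ^ (2 * j)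
            * (2 * π * (Nat.centralBinom (j + 1) : ℝ) / 4 ^ (j + 1)) := by
    rw [intervalIntegral.integral_congr (g := fun θ =>
      ∑ j ∈ Finset.range (m + 1),
          (Nat.choose m j : ℝ) * k ^ (2 * (m - j)) * A ^ (2 * j)
            * Real.cos θ ^ (2 * (j + 1))) (fun θ _ => hexp θ)]
    rw [intervalIntegral.integral_finset_sum]
    · refine Finset.sum_congr rfl fun j _ => ?_
      rw [intervalIntegral.integral_const_mul, int_cos_even]
    · intro j _
      apply Continuous.intervalIntegrable
      fun_prop
  rw [hInt, Finset.mul_sum]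
  refine Finset.sum_congr rfl fun j _ => ?_
  rw [central_eq]
  have hπ : π ≠ 0 := Real.pi_ne_zero
  have h4 : (4 : ℝ) ^ j ≠ 0 := by positivity
  push_cast
  field_simp
  have h5 : (4 : ℝ) ^ (j + 1) * (1 / 4) ^ j = 4 := by
    rw [pow_succ, mul_right_comm, ← mul_pow]
    norm_num
  linear_combination (-((Nat.choose m j : ℝ) * k ^ (2 * (m - j)) * A ^ (2 * j)
    * (Nat.choose (2 * j + 1) j : ℝ))) * h5
end

section
/- Let T(A) = 4 ∫₀^A dx/√(2h − x² − x⁴/2) with h = A²/2 + A⁴/4 be the period function of the Duffing-harmonic oscillator ẋ = −y, ẏ = x + x³. Then, as A → 0⁺, T(A) = 2π − (3/4)πA² + (57/128)πA⁴ − (315/1024)πA⁶ + (30345/131072)πA⁸ + O(A^{10}); that is, there exist C, δ > 0 such that the difference between T(A) and this polynomial is at most C A^{10} for 0 < A < δ. -/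
open Real

noncomputable def duffPP (u : ℝ) : ℝ :=
  1 - u / 2 + 3 * u ^ 2 / 8 - 5 * u ^ 3 / 16 + 35 * u ^ 4 / 128

lemma duff_taylor_bound {u : ℝ} (h0 : 0 ≤ u) (h1 : u ≤ 1) :
    |1 / Real.sqrt (1 + u) - duffPP u| ≤ u ^ 5 := by
  have h1u : (0:ℝ) ≤ 1 + u := by linarith
  set v := Real.sqrt (1 + u) with hvdef
  have hv2 : v ^ 2 = 1 + u := Real.sq_sqrt h1u
  have hv0 : 0 ≤ v := Real.sqrt_nonneg _
  have hv1 : 1 ≤ v := by nlinarith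
  have hv32 : v ≤ 3 / 2 := by nlinarith
  have hu : u = v ^ 2 - 1 := by linarith
  rw [hu]
  set r : ℝ := (128 + 325 * v + 345 * v ^ 2 + 175 * v ^ 3 + 35 * v ^ 4) / 128 with hrdef
  have hE : v * duffPP (v ^ 2 - 1) - 1 = (v - 1) ^ 5 * r := by
    unfold duffPP; rw [hrdef]; ring
  have h5 : (0:ℝ) ≤ (v - 1) ^ 5 := pow_nonneg (by linarith) 5
  have hr0 : 0 ≤ r := by rw [hrdef]; positivity
  have hE0 : 0 ≤ v * duffPP (v ^ 2 - 1) - 1 := by rw [hE]; exact mul_nonneg h5 hr0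
  have hvsq : v ^ 2 ≤ 9 / 4 := by nlinarith
  have hvcb : v ^ 3 ≤ 27 / 8 := by nlinarith
  have hv4 : v ^ 4 ≤ 81 / 16 := by nlinarith
  have hrle : r ≤ 17 := by rw [hrdef]; nlinarith
  have hpow : (2:ℝ) ^ 5 ≤ (v + 1) ^ 5 := by
    apply pow_le_pow_left₀ (by norm_num) (by linarith)
  have hrle' : 0 ≤ (v + 1) ^ 5 - r := by norm_num at hpow ⊢; linarith
  have hEle : v * duffPP (v ^ 2 - 1) - 1 ≤ (v ^ 2 - 1) ^ 5 := by
    have key : (v ^ 2 - 1) ^ 5 - (v * duffPP (v ^ 2 - 1) - 1)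
        = (v - 1) ^ 5 * ((v + 1) ^ 5 - r) := by
      unfold duffPP; rw [hrdef]; ring
    nlinarith [mul_nonneg h5 hrle']
  have hvne : v ≠ 0 := by linarith
  have hfrac : duffPP (v ^ 2 - 1) - 1 / v = (v * duffPP (v ^ 2 - 1) - 1) / v := by
    field_simp
  rw [abs_sub_comm, abs_of_nonneg (by rw [hfrac]; exact div_nonneg hE0 (by linarith))]
  rw [hfrac]
  calc (v * duffPP (v ^ 2 - 1) - 1) / v ≤ v * duffPP (v ^ 2 - 1) - 1 :=
        div_le_self hE0 hv1
    _ ≤ (v ^ 2 - 1) ^ 5 := hEle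

lemma duff_sin_sq : ∫ x in (0:ℝ)..(π/2), Real.sin x ^ 2 = π / 4 := by
  simp; ring

lemma duff_sin_four : ∫ x in (0:ℝ)..(π/2), Real.sin x ^ 4 = 3 * π / 16 := by
  have := integral_sin_pow (a := 0) (b := π/2) 2
  simp [duff_sin_sq] at this
  rw [show (4:ℕ) = 2 + 2 from rfl, this]; ring

lemma duff_sin_six : ∫ x in (0:ℝ)..(π/2), Real.sin x ^ 6 = 5 * π / 32 := by
  have := integral_sin_pow (a := 0) (b := π/2) 4
  simp [duff_sin_four] at this
  rw [show (6:ℕ) = 4 + 2 from rfl, this]; ring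

lemma duff_sin_eight : ∫ x in (0:ℝ)..(π/2), Real.sin x ^ 8 = 35 * π / 256 := by
  have := integral_sin_pow (a := 0) (b := π/2) 6
  simp [duff_sin_six] at this
  rw [show (8:ℕ) = 6 + 2 from rfl, this]; ring

lemma duff_poly_integral (a0 a1 a2 a3 a4 : ℝ) :
    ∫ x in (0:ℝ)..(π/2), (a0 + a1 * Real.sin x ^ 2 + a2 * Real.sin x ^ 4
        + a3 * Real.sin x ^ 6 + a4 * Real.sin x ^ 8)
      = a0 * (π/2) + a1 * (π/4) + a2 * (3*π/16) + a3 * (5*π/32) + a4 * (35*π/256) := by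
  have hi : ∀ k : ℕ, IntervalIntegrable (fun x => Real.sin x ^ k) MeasureTheory.volume 0 (π/2) :=
    fun k => (continuous_sin.pow k).intervalIntegrable 0 (π/2)
  have h1 : ∀ c : ℝ, ∀ k : ℕ,
      IntervalIntegrable (fun x => c * Real.sin x ^ k) MeasureTheory.volume 0 (π/2) :=
    fun c k => (hi k).const_mul c
  rw [intervalIntegral.integral_add (((((intervalIntegrable_const).add (h1 a1 2)).add
        (h1 a2 4)).add (h1 a3 6))) (h1 a4 8),
      intervalIntegral.integral_add ((((intervalIntegrable_const).add (h1 a1 2)).add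
        (h1 a2 4))) (h1 a3 6),
      intervalIntegral.integral_add (((intervalIntegrable_const).add (h1 a1 2))) (h1 a2 4),
      intervalIntegral.integral_add (intervalIntegrable_const) (h1 a1 2),
      intervalIntegral.integral_const, intervalIntegral.integral_const_mul,
      intervalIntegral.integral_const_mul, intervalIntegral.integral_const_mul,
      intervalIntegral.integral_const_mul,
      duff_sin_sq, duff_sin_four, duff_sin_six, duff_sin_eight]
  simp [smul_eq_mul]; ring

/-- Taylor expansion at `A = 0` of the period function of the Duffing-harmonic
oscillator `ẋ = −y, ẏ = x + x³`:
`T(A) = 2π − (3/4)πA² + (57/128)πA⁴ − (315/1024)πA⁶ + (30345/131072)πA⁸ + O(A¹⁰)`. -/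
theorem duffing_period_taylor (T : ℝ → ℝ)
    (hT : ∀ A : ℝ, T A = 4 * ∫ x in (0:ℝ)..A,
        1 / Real.sqrt (2 * (A ^ 2 / 2 + A ^ 4 / 4) - x ^ 2 - x ^ 4 / 2)) :
    ∃ C > (0 : ℝ), ∃ δ > (0 : ℝ), ∀ A : ℝ, 0 < A → A < δ →
      |T A - (2 * π - (3 / 4) * π * A ^ 2 + (57 / 128) * π * A ^ 4
          - (315 / 1024) * π * A ^ 6 + (30345 / 131072) * π * A ^ 8)| ≤ C * A ^ 10 := by
  refine ⟨8, by norm_num, 1, by norm_num, fun A hA hA1 => ?_⟩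
  -- the substituted integrand
  set W : ℝ → ℝ := fun θ => 1 + A ^ 2 * (1 + Real.sin θ ^ 2) / 2 with hWdef
  have hWpos : ∀ θ, 0 < W θ := by
    intro θ; rw [hWdef]; positivity
  -- Step 1: change of variables x = A sin θ
  have hsub : (∫ x in (0:ℝ)..A,
      1 / Real.sqrt (2 * (A ^ 2 / 2 + A ^ 4 / 4) - x ^ 2 - x ^ 4 / 2))
      = ∫ θ in (0:ℝ)..(π/2), 1 / Real.sqrt (W θ) := by
    have himg : (fun θ => A * Real.sin θ) '' Set.Ioo 0 (π/2) = Set.Ioo 0 A := by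
      ext x
      constructor
      · rintro ⟨θ, ⟨h0, h1⟩, rfl⟩
        have hs0 : 0 < Real.sin θ := Real.sin_pos_of_pos_of_lt_pi h0 (by linarith [pi_pos])
        have hs1 : Real.sin θ < 1 := by
          have h2 := Real.strictMonoOn_sin
            (Set.mem_Icc.2 ⟨by linarith [pi_div_two_pos], le_of_lt h1⟩)
            (Set.mem_Icc.2 ⟨by linarith [pi_div_two_pos], le_refl _⟩) h1
          rw [Real.sin_pi_div_two] at h2
          exact h2
        simp only [Set.mem_Ioo]
        exact ⟨mul_pos hA hs0, by nlinarith⟩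
      · rintro ⟨hx0, hxA⟩
        refine ⟨Real.arcsin (x / A), ⟨?_, ?_⟩, ?_⟩
        · exact Real.arcsin_pos.2 (div_pos hx0 hA)
        · exact Real.arcsin_lt_pi_div_two.2 (by rw [div_lt_one hA]; exact hxA)
        · show A * Real.sin (Real.arcsin (x / A)) = x
          rw [Real.sin_arcsin (by have := (div_pos hx0 hA).le; linarith)
            (by rw [div_le_one hA]; linarith)]
          field_simp
    have hmono : StrictMonoOn (fun θ => A * Real.sin θ) (Set.Icc (-(π/2)) (π/2)) :=
      fun x hx y hy hxy => mul_lt_mul_of_pos_left (Real.strictMonoOn_sin hx hy hxy) hA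
    have hsubset : Set.Ioo (0:ℝ) (π/2) ⊆ Set.Icc (-(π/2)) (π/2) := fun θ hθ =>
      Set.mem_Icc.2 ⟨by linarith [hθ.1, pi_div_two_pos], le_of_lt hθ.2⟩
    have hinj : Set.InjOn (fun θ => A * Real.sin θ) (Set.Ioo 0 (π/2)) :=
      hmono.injOn.mono hsubset
    have hderiv : ∀ θ ∈ Set.Ioo (0:ℝ) (π/2),
        HasDerivWithinAt (fun θ => A * Real.sin θ) (A * Real.cos θ) (Set.Ioo 0 (π/2)) θ :=
      fun θ _ => ((Real.hasDerivAt_sin θ).const_mul A).hasDerivWithinAt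
    rw [intervalIntegral.integral_of_le hA.le, MeasureTheory.integral_Ioc_eq_integral_Ioo,
        intervalIntegral.integral_of_le (le_of_lt pi_div_two_pos),
        MeasureTheory.integral_Ioc_eq_integral_Ioo, ← himg,
        MeasureTheory.integral_image_eq_integral_abs_deriv_smul measurableSet_Ioo hderiv hinj]
    apply MeasureTheory.setIntegral_congr_fun measurableSet_Ioo
    intro θ hθ
    have hc : 0 < Real.cos θ :=
      Real.cos_pos_of_mem_Ioo ⟨by linarith [hθ.1, pi_div_two_pos], hθ.2⟩
    have hcs : Real.cos θ ^ 2 = 1 - Real.sin θ ^ 2 := Real.cos_sq' θ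
    have key : 2 * (A ^ 2 / 2 + A ^ 4 / 4) - (A * Real.sin θ) ^ 2 - (A * Real.sin θ) ^ 4 / 2
        = (A * Real.cos θ) ^ 2 * W θ := by
      rw [hWdef]
      linear_combination (-(A ^ 2) * (1 + A ^ 2 * (1 + Real.sin θ ^ 2) / 2)) * hcs
    have hACpos : 0 < A * Real.cos θ := mul_pos hA hc
    have hWroot : 0 < Real.sqrt (W θ) := Real.sqrt_pos.2 (hWpos θ)
    simp only [smul_eq_mul, key]
    rw [Real.sqrt_mul (sq_nonneg _), Real.sqrt_sq hACpos.le,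
        abs_of_pos hACpos]
    field_simp
  -- Step 2: the integral of the polynomial part
  have hpoly : (∫ θ in (0:ℝ)..(π/2), duffPP (A ^ 2 * (1 + Real.sin θ ^ 2) / 2))
      = π / 2 - (3/16) * π * A ^ 2 + (57/512) * π * A ^ 4
        - (315/4096) * π * A ^ 6 + (30345/524288) * π * A ^ 8 := by
    have hpt : ∀ x : ℝ, duffPP (A ^ 2 * (1 + Real.sin x ^ 2) / 2)
        = (1 - A^2/4 + 3*A^4/32 - 5*A^6/128 + 35*A^8/2048)
          + (-A^2/4 + 3*A^4/16 - 15*A^6/128 + 35*A^8/512) * Real.sin x ^ 2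
          + (3*A^4/32 - 15*A^6/128 + 105*A^8/1024) * Real.sin x ^ 4
          + (-5*A^6/128 + 35*A^8/512) * Real.sin x ^ 6
          + (35*A^8/2048) * Real.sin x ^ 8 := by
      intro x; unfold duffPP; ring
    rw [intervalIntegral.integral_congr (fun x _ => hpt x), duff_poly_integral]
    ring
  -- Step 3: the error bound
  have hcont : Continuous fun θ => 1 / Real.sqrt (W θ) := by
    apply Continuous.div continuous_const
    · exact Real.continuous_sqrt.comp (by rw [hWdef]; fun_prop)
    · exact fun θ => (Real.sqrt_pos.2 (hWpos θ)).ne'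
  have hcontp : Continuous fun θ => duffPP (A ^ 2 * (1 + Real.sin θ ^ 2) / 2) := by
    unfold duffPP; fun_prop
  have hsplit : (∫ θ in (0:ℝ)..(π/2), 1 / Real.sqrt (W θ))
      = (∫ θ in (0:ℝ)..(π/2), (1 / Real.sqrt (W θ)
          - duffPP (A ^ 2 * (1 + Real.sin θ ^ 2) / 2)))
        + ∫ θ in (0:ℝ)..(π/2), duffPP (A ^ 2 * (1 + Real.sin θ ^ 2) / 2) := by
    rw [← intervalIntegral.integral_add (f := fun θ => 1 / Real.sqrt (W θ)
        - duffPP (A ^ 2 * (1 + Real.sin θ ^ 2) / 2))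
      ((hcont.sub hcontp).intervalIntegrable _ _) (hcontp.intervalIntegrable _ _)]
    simp
  have herr : |∫ θ in (0:ℝ)..(π/2), (1 / Real.sqrt (W θ)
      - duffPP (A ^ 2 * (1 + Real.sin θ ^ 2) / 2))| ≤ A ^ 10 * (π/2) := by
    have hb : ∀ θ ∈ Set.uIoc (0:ℝ) (π/2),
        ‖1 / Real.sqrt (W θ) - duffPP (A ^ 2 * (1 + Real.sin θ ^ 2) / 2)‖ ≤ A ^ 10 := by
      intro θ _
      have hs2 : Real.sin θ ^ 2 ≤ 1 := Real.sin_sq_le_one θ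
      set u : ℝ := A ^ 2 * (1 + Real.sin θ ^ 2) / 2 with hudef
      have hu0 : 0 ≤ u := by rw [hudef]; positivity
      have huA : u ≤ A ^ 2 := by rw [hudef]; nlinarith
      have hu1 : u ≤ 1 := by nlinarith
      have hWu : W θ = 1 + u := by rw [hWdef, hudef]
      rw [Real.norm_eq_abs, hWu]
      calc |1 / Real.sqrt (1 + u) - duffPP u| ≤ u ^ 5 := duff_taylor_bound hu0 hu1
        _ ≤ (A ^ 2) ^ 5 := pow_le_pow_left₀ hu0 huA 5
        _ = A ^ 10 := by ring
    have := intervalIntegral.norm_integral_le_of_norm_le_const hb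
    rw [Real.norm_eq_abs] at this
    calc |∫ θ in (0:ℝ)..(π/2), (1 / Real.sqrt (W θ)
          - duffPP (A ^ 2 * (1 + Real.sin θ ^ 2) / 2))|
        ≤ A ^ 10 * |π/2 - 0| := this
      _ = A ^ 10 * (π/2) := by rw [sub_zero, abs_of_pos pi_div_two_pos]
  -- assemble
  rw [hT A, hsub, hsplit, hpoly]
  have hpi : π ≤ 4 := by linarith [Real.pi_le_four]
  have h10 : 0 < A ^ 10 := by positivity
  rw [show (4:ℝ) * ((∫ θ in (0:ℝ)..(π/2), (1 / Real.sqrt (W θ)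
      - duffPP (A ^ 2 * (1 + Real.sin θ ^ 2) / 2)))
      + (π / 2 - (3/16) * π * A ^ 2 + (57/512) * π * A ^ 4
        - (315/4096) * π * A ^ 6 + (30345/524288) * π * A ^ 8))
    - (2 * π - (3 / 4) * π * A ^ 2 + (57 / 128) * π * A ^ 4
        - (315 / 1024) * π * A ^ 6 + (30345 / 131072) * π * A ^ 8)
    = 4 * (∫ θ in (0:ℝ)..(π/2), (1 / Real.sqrt (W θ)
      - duffPP (A ^ 2 * (1 + Real.sin θ ^ 2) / 2))) from by ring]
  rw [abs_mul, abs_of_pos (by norm_num : (0:ℝ) < 4)]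
  calc (4:ℝ) * |∫ θ in (0:ℝ)..(π/2), (1 / Real.sqrt (W θ)
        - duffPP (A ^ 2 * (1 + Real.sin θ ^ 2) / 2))|
      ≤ 4 * (A ^ 10 * (π/2)) := by linarith [herr]
    _ ≤ 8 * A ^ 10 := by nlinarith
end

section
/- For each A ≥ 0 the polynomial p_A(ω) = 1058 ω⁶ − 3(219A² + 322) ω⁴ − (9/4)(21A⁴ + 80A² + 40) ω² − (27/64) A² (7A² + 8)² − 2 has exactly one positive real root ω₂(A). Moreover, the function T₂(A) = 2π/ω₂(A) satisfies, as A → 0⁺, T₂(A) = 2π − (3/4)πA² + (57/128)πA⁴ − (633/2048)πA⁶ + O(A⁸). -/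
open Real

set_option maxHeartbeats 4000000 in
/-- Second-order harmonic balance for the Duffing-harmonic oscillator: for each
`A ≥ 0` the sextic `p_A(ω)` has exactly one positive real root `ω₂(A)`, and
`T₂(A) = 2π/ω₂(A)` satisfies
`T₂(A) = 2π − (3/4)πA² + (57/128)πA⁴ − (633/2048)πA⁶ + O(A⁸)` at `A = 0⁺`. -/
theorem second_order_HBM_duffing (p : ℝ → ℝ → ℝ)
    (hp : ∀ A ω : ℝ, p A ω = 1058 * ω ^ 6 - 3 * (219 * A ^ 2 + 322) * ω ^ 4
        - (9 / 4) * (21 * A ^ 4 + 80 * A ^ 2 + 40) * ω ^ 2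
        - (27 / 64) * A ^ 2 * (7 * A ^ 2 + 8) ^ 2 - 2)
    (ω₂ : ℝ → ℝ)
    (hω₂ : ∀ A : ℝ, 0 ≤ A → 0 < ω₂ A ∧ p A (ω₂ A) = 0)
    (T₂ : ℝ → ℝ)
    (hT₂ : ∀ A : ℝ, T₂ A = 2 * π / ω₂ A) :
    (∀ A : ℝ, 0 ≤ A → ∃! ω : ℝ, 0 < ω ∧ p A ω = 0)
    ∧ ∃ C > (0 : ℝ), ∃ δ > (0 : ℝ), ∀ A : ℝ, 0 < A → A < δ →
        |T₂ A - (2 * π - (3 / 4) * π * A ^ 2 + (57 / 128) * π * A ^ 4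
            - (633 / 2048) * π * A ^ 6)| ≤ C * A ^ 8 := by
  have key : ∀ A ω ω' : ℝ, 0 ≤ A → 0 < ω → ω < ω' →
      0 < ω ^ 4 * p A ω' - ω' ^ 4 * p A ω := by
    intro A ω ω' hA hω hlt
    have hω' : 0 < ω' := hω.trans hlt
    have h1 : 0 < ω' ^ 2 - ω ^ 2 := by nlinarith
    have h2 : 0 < ω' ^ 4 - ω ^ 4 := by nlinarith
    have ha : 0 < ω ^ 2 * ω' ^ 2 * (ω' ^ 2 - ω ^ 2) :=
      mul_pos (mul_pos (pow_pos hω 2) (pow_pos hω' 2)) h1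
    have hT1 : 0 < ω ^ 4 * ω' ^ 4 * (ω' ^ 2 - ω ^ 2) :=
      mul_pos (mul_pos (pow_pos hω 4) (pow_pos hω' 4)) h1
    have hA2 : (0:ℝ) ≤ A ^ 2 := sq_nonneg A
    have hA4 : (0:ℝ) ≤ A ^ 4 := by positivity
    have hA6 : (0:ℝ) ≤ A ^ 6 := by positivity
    have hA2a : 0 ≤ A ^ 2 * (ω ^ 2 * ω' ^ 2 * (ω' ^ 2 - ω ^ 2)) := mul_nonneg hA2 ha.le
    have hA4a : 0 ≤ A ^ 4 * (ω ^ 2 * ω' ^ 2 * (ω' ^ 2 - ω ^ 2)) := mul_nonneg hA4 ha.le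
    have hA2b : 0 ≤ A ^ 2 * (ω' ^ 4 - ω ^ 4) := mul_nonneg hA2 h2.le
    have hA4b : 0 ≤ A ^ 4 * (ω' ^ 4 - ω ^ 4) := mul_nonneg hA4 h2.le
    have hA6b : 0 ≤ A ^ 6 * (ω' ^ 4 - ω ^ 4) := mul_nonneg hA6 h2.le
    rw [hp, hp]
    nlinarith [hT1, ha, hA2a, hA4a, hA2b, hA4b, hA6b, h2]
  have uniq : ∀ A : ℝ, 0 ≤ A → ∀ ω : ℝ, 0 < ω → p A ω = 0 → ω = ω₂ A := by
    intro A hA ω hω hroot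
    obtain ⟨hwpos, hwroot⟩ := hω₂ A hA
    rcases lt_trichotomy ω (ω₂ A) with h | h | h
    · exfalso
      have := key A ω (ω₂ A) hA hω h
      rw [hroot, hwroot] at this
      simp at this
    · exact h
    · exfalso
      have := key A (ω₂ A) ω hA hwpos h
      rw [hroot, hwroot] at this
      simp at this
  constructor
  · intro A hA
    exact ⟨ω₂ A, ⟨(hω₂ A hA).1, (hω₂ A hA).2⟩, fun ω hω => uniq A hA ω hω.1 hω.2⟩
  · refine ⟨24, by norm_num, 1/10, by norm_num, ?_⟩
    intro A hA0 hAδ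
    have hA : (0:ℝ) ≤ A := hA0.le
    obtain ⟨hwpos, hwroot⟩ := hω₂ A hA
    have hn2 : (0:ℝ) ≤ A ^ 2 := by positivity
    have hn4 : (0:ℝ) ≤ A ^ 4 := by positivity
    have hn6 : (0:ℝ) ≤ A ^ 6 := by positivity
    have hn8 : (0:ℝ) ≤ A ^ 8 := by positivity
    have hn10 : (0:ℝ) ≤ A ^ 10 := by positivity
    have hn12 : (0:ℝ) ≤ A ^ 12 := by positivity
    have hn14 : (0:ℝ) ≤ A ^ 14 := by positivity
    have hn16 : (0:ℝ) ≤ A ^ 16 := by positivity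
    have hn18 : (0:ℝ) ≤ A ^ 18 := by positivity
    have hn20 : (0:ℝ) ≤ A ^ 20 := by positivity
    have hn22 : (0:ℝ) ≤ A ^ 22 := by positivity
    have hn24 : (0:ℝ) ≤ A ^ 24 := by positivity
    have hn26 : (0:ℝ) ≤ A ^ 26 := by positivity
    have hn28 : (0:ℝ) ≤ A ^ 28 := by positivity
    have hn30 : (0:ℝ) ≤ A ^ 30 := by positivity
    have hn32 : (0:ℝ) ≤ A ^ 32 := by positivity
    have hn34 : (0:ℝ) ≤ A ^ 34 := by positivity
    have hn36 : (0:ℝ) ≤ A ^ 36 := by positivity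
    have hn38 : (0:ℝ) ≤ A ^ 38 := by positivity
    have hn40 : (0:ℝ) ≤ A ^ 40 := by positivity
    have h2 : A ^ 2 ≤ (1 : ℝ)/100 := by nlinarith
    have h4 : A ^ 4 ≤ (1 : ℝ)/10000 := by
      calc A ^ 4 = (A ^ 2) ^ 2 := by ring
        _ ≤ ((1:ℝ)/100) ^ 2 := pow_le_pow_left₀ (sq_nonneg A) h2 2
        _ = (1 : ℝ)/10000 := by norm_num
    have h6 : A ^ 6 ≤ (1 : ℝ)/1000000 := by
      calc A ^ 6 = (A ^ 2) ^ 3 := by ring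
        _ ≤ ((1:ℝ)/100) ^ 3 := pow_le_pow_left₀ (sq_nonneg A) h2 3
        _ = (1 : ℝ)/1000000 := by norm_num
    have h8 : A ^ 8 ≤ (1 : ℝ)/100000000 := by
      calc A ^ 8 = (A ^ 2) ^ 4 := by ring
        _ ≤ ((1:ℝ)/100) ^ 4 := pow_le_pow_left₀ (sq_nonneg A) h2 4
        _ = (1 : ℝ)/100000000 := by norm_num
    have h10 : A ^ 10 ≤ (1 : ℝ)/10000000000 := by
      calc A ^ 10 = (A ^ 2) ^ 5 := by ring
        _ ≤ ((1:ℝ)/100) ^ 5 := pow_le_pow_left₀ (sq_nonneg A) h2 5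
        _ = (1 : ℝ)/10000000000 := by norm_num
    have h12 : A ^ 12 ≤ (1 : ℝ)/1000000000000 := by
      calc A ^ 12 = (A ^ 2) ^ 6 := by ring
        _ ≤ ((1:ℝ)/100) ^ 6 := pow_le_pow_left₀ (sq_nonneg A) h2 6
        _ = (1 : ℝ)/1000000000000 := by norm_num
    have h14 : A ^ 14 ≤ (1 : ℝ)/100000000000000 := by
      calc A ^ 14 = (A ^ 2) ^ 7 := by ring
        _ ≤ ((1:ℝ)/100) ^ 7 := pow_le_pow_left₀ (sq_nonneg A) h2 7
        _ = (1 : ℝ)/100000000000000 := by norm_num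
    have h16 : A ^ 16 ≤ (1 : ℝ)/10000000000000000 := by
      calc A ^ 16 = (A ^ 2) ^ 8 := by ring
        _ ≤ ((1:ℝ)/100) ^ 8 := pow_le_pow_left₀ (sq_nonneg A) h2 8
        _ = (1 : ℝ)/10000000000000000 := by norm_num
    have h18 : A ^ 18 ≤ (1 : ℝ)/1000000000000000000 := by
      calc A ^ 18 = (A ^ 2) ^ 9 := by ring
        _ ≤ ((1:ℝ)/100) ^ 9 := pow_le_pow_left₀ (sq_nonneg A) h2 9
        _ = (1 : ℝ)/1000000000000000000 := by norm_num
    have h20 : A ^ 20 ≤ (1 : ℝ)/100000000000000000000 := by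
      calc A ^ 20 = (A ^ 2) ^ 10 := by ring
        _ ≤ ((1:ℝ)/100) ^ 10 := pow_le_pow_left₀ (sq_nonneg A) h2 10
        _ = (1 : ℝ)/100000000000000000000 := by norm_num
    have h22 : A ^ 22 ≤ (1 : ℝ)/10000000000000000000000 := by
      calc A ^ 22 = (A ^ 2) ^ 11 := by ring
        _ ≤ ((1:ℝ)/100) ^ 11 := pow_le_pow_left₀ (sq_nonneg A) h2 11
        _ = (1 : ℝ)/10000000000000000000000 := by norm_num
    have h24 : A ^ 24 ≤ (1 : ℝ)/1000000000000000000000000 := by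
      calc A ^ 24 = (A ^ 2) ^ 12 := by ring
        _ ≤ ((1:ℝ)/100) ^ 12 := pow_le_pow_left₀ (sq_nonneg A) h2 12
        _ = (1 : ℝ)/1000000000000000000000000 := by norm_num
    have h26 : A ^ 26 ≤ (1 : ℝ)/100000000000000000000000000 := by
      calc A ^ 26 = (A ^ 2) ^ 13 := by ring
        _ ≤ ((1:ℝ)/100) ^ 13 := pow_le_pow_left₀ (sq_nonneg A) h2 13
        _ = (1 : ℝ)/100000000000000000000000000 := by norm_num
    have h28 : A ^ 28 ≤ (1 : ℝ)/10000000000000000000000000000 := by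
      calc A ^ 28 = (A ^ 2) ^ 14 := by ring
        _ ≤ ((1:ℝ)/100) ^ 14 := pow_le_pow_left₀ (sq_nonneg A) h2 14
        _ = (1 : ℝ)/10000000000000000000000000000 := by norm_num
    have h30 : A ^ 30 ≤ (1 : ℝ)/1000000000000000000000000000000 := by
      calc A ^ 30 = (A ^ 2) ^ 15 := by ring
        _ ≤ ((1:ℝ)/100) ^ 15 := pow_le_pow_left₀ (sq_nonneg A) h2 15
        _ = (1 : ℝ)/1000000000000000000000000000000 := by norm_num
    have h32 : A ^ 32 ≤ (1 : ℝ)/100000000000000000000000000000000 := by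
      calc A ^ 32 = (A ^ 2) ^ 16 := by ring
        _ ≤ ((1:ℝ)/100) ^ 16 := pow_le_pow_left₀ (sq_nonneg A) h2 16
        _ = (1 : ℝ)/100000000000000000000000000000000 := by norm_num
    have h34 : A ^ 34 ≤ (1 : ℝ)/10000000000000000000000000000000000 := by
      calc A ^ 34 = (A ^ 2) ^ 17 := by ring
        _ ≤ ((1:ℝ)/100) ^ 17 := pow_le_pow_left₀ (sq_nonneg A) h2 17
        _ = (1 : ℝ)/10000000000000000000000000000000000 := by norm_num
    have h36 : A ^ 36 ≤ (1 : ℝ)/1000000000000000000000000000000000000 := by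
      calc A ^ 36 = (A ^ 2) ^ 18 := by ring
        _ ≤ ((1:ℝ)/100) ^ 18 := pow_le_pow_left₀ (sq_nonneg A) h2 18
        _ = (1 : ℝ)/1000000000000000000000000000000000000 := by norm_num
    have h38 : A ^ 38 ≤ (1 : ℝ)/100000000000000000000000000000000000000 := by
      calc A ^ 38 = (A ^ 2) ^ 19 := by ring
        _ ≤ ((1:ℝ)/100) ^ 19 := pow_le_pow_left₀ (sq_nonneg A) h2 19
        _ = (1 : ℝ)/100000000000000000000000000000000000000 := by norm_num
    have h40 : A ^ 40 ≤ (1 : ℝ)/10000000000000000000000000000000000000000 := by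
      calc A ^ 40 = (A ^ 2) ^ 20 := by ring
        _ ≤ ((1:ℝ)/100) ^ 20 := pow_le_pow_left₀ (sq_nonneg A) h2 20
        _ = (1 : ℝ)/10000000000000000000000000000000000000000 := by norm_num
    have hA8pos : (0:ℝ) < A ^ 8 := by positivity
    have hQp : (0:ℝ) < (9459 : ℝ)/4 + (74921643 : ℝ)/16384 * A ^ 2 + (2606584383 : ℝ)/1048576 * A ^ 4 + (4822449255 : ℝ)/16777216 * A ^ 6 + (5633920707081 : ℝ)/536870912 * A ^ 8 + (135308812180725 : ℝ)/8589934592 * A ^ 10 + (1459235182263147 : ℝ)/274877906944 * A ^ 12 + (171090517617261 : ℝ)/4398046511104 * A ^ 14 + (2627172016751499461 : ℝ)/140737488355328 * A ^ 16 + (22824771029867401749 : ℝ)/1125899906842624 * A ^ 18 + (105942096924315829029 : ℝ)/36028797018963968 * A ^ 20 + (-32377457426124652173 : ℝ)/288230376151711744 * A ^ 22 + (151513520746174049418507 : ℝ)/9223372036854775808 * A ^ 24 + (836673760023543895411557 : ℝ)/73786976294838206464 * A ^ 26 + (-1027963432801492647432615 : ℝ)/2361183241434822606848 * A ^ 28 +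 (103102599875045023215 : ℝ)/288230376151711744 * A ^ 30 + (974727254167870479 : ℝ)/140737488355328 * A ^ 32 + (19559272179681 : ℝ)/8589934592 * A ^ 34 + (-4152206169 : ℝ)/8388608 * A ^ 36 + (261855 : ℝ)/1024 * A ^ 38 + (1058 : ℝ) * A ^ 40 := by
      linarith only [h2, h4, h6, h8, h10, h12, h14, h16, h18, h20, h22, h24, h26, h28, h30, h32, h34, h36, h38, h40, hn2, hn4, hn6, hn8, hn10, hn12, hn14, hn16, hn18, hn20, hn22, hn24, hn26, hn28, hn30, hn32, hn34, hn36, hn38, hn40]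
    have hQm : ((-8973 : ℝ)/4 + (-72534357 : ℝ)/16384 * A ^ 2 + (-2579148225 : ℝ)/1048576 * A ^ 4 + (-4841227161 : ℝ)/16777216 * A ^ 6 + (5093304543753 : ℝ)/536870912 * A ^ 8 + (128174315232501 : ℝ)/8589934592 * A ^ 10 + (1462525196942187 : ℝ)/274877906944 * A ^ 12 + (82702078765677 : ℝ)/4398046511104 * A ^ 14 + (-2248486414149363515 : ℝ)/140737488355328 * A ^ 16 + (-21590496836577947115 : ℝ)/1125899906842624 * A ^ 18 + (-113932485820610165979 : ℝ)/36028797018963968 * A ^ 20 + (66662196546203533683 : ℝ)/288230376151711744 * A ^ 22 + (123720315712470649666827 : ℝ)/9223372036854775808 * A ^ 24 + (821870283821735942146917 : ℝ)/73786976294838206464 * A ^ 26 + (-716276849605311652319655 : ℝ)/2361183241434822606848 * A ^ 28 + (70914480814629134865 : ℝ)/288230376151711744 * A ^ 30 + (-809697393193165809 : ℝ)/140737488355328 * A ^ 32 + (-21361169754081 : ℝ)/8589934592 * A ^ 34 + (4584266919 : ℝ)/8388608 * A ^ 36 + (-261855 : ℝ)/1024 * A ^ 38 + (1058 : ℝ)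 * A ^ 40) < 0 := by
      linarith only [h2, h4, h6, h8, h10, h12, h14, h16, h18, h20, h22, h24, h26, h28, h30, h32, h34, h36, h38, h40, hn2, hn4, hn6, hn8, hn10, hn12, hn14, hn16, hn18, hn20, hn22, hn24, hn26, hn28, hn30, hn32, hn34, hn36, hn38, hn40]
    have hplus : p A (((1 : ℝ) + (3 : ℝ)/8 * A ^ 2 + (-21 : ℝ)/256 * A ^ 4 + (165 : ℝ)/4096 * A ^ 6) + A ^ 8)
        = A ^ 8 * ((9459 : ℝ)/4 + (74921643 : ℝ)/16384 * A ^ 2 + (2606584383 : ℝ)/1048576 * A ^ 4 + (4822449255 : ℝ)/16777216 * A ^ 6 + (5633920707081 : ℝ)/536870912 * A ^ 8 + (135308812180725 : ℝ)/8589934592 * A ^ 10 + (1459235182263147 : ℝ)/274877906944 * A ^ 12 + (171090517617261 : ℝ)/4398046511104 * A ^ 14 + (2627172016751499461 : ℝ)/140737488355328 * A ^ 16 + (22824771029867401749 : ℝ)/1125899906842624 * A ^ 18 + (105942096924315829029 : ℝ)/36028797018963968 * A ^ 20 + (-32377457426124652173 : ℝ)/288230376151711744 * A ^ 22 + (151513520746174049418507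 : ℝ)/9223372036854775808 * A ^ 24 + (836673760023543895411557 : ℝ)/73786976294838206464 * A ^ 26 + (-1027963432801492647432615 : ℝ)/2361183241434822606848 * A ^ 28 + (103102599875045023215 : ℝ)/288230376151711744 * A ^ 30 + (974727254167870479 : ℝ)/140737488355328 * A ^ 32 + (19559272179681 : ℝ)/8589934592 * A ^ 34 + (-4152206169 : ℝ)/8388608 * A ^ 36 + (261855 : ℝ)/1024 * A ^ 38 + (1058 : ℝ) * A ^ 40) := by rw [hp]; ring
    have hminus : p A (((1 : ℝ) + (3 : ℝ)/8 * A ^ 2 + (-21 : ℝ)/256 * A ^ 4 + (165 : ℝ)/4096 * A ^ 6) - A ^ 8)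
        = A ^ 8 * ((-8973 : ℝ)/4 + (-72534357 : ℝ)/16384 * A ^ 2 + (-2579148225 : ℝ)/1048576 * A ^ 4 + (-4841227161 : ℝ)/16777216 * A ^ 6 + (5093304543753 : ℝ)/536870912 * A ^ 8 + (128174315232501 : ℝ)/8589934592 * A ^ 10 + (1462525196942187 : ℝ)/274877906944 * A ^ 12 + (82702078765677 : ℝ)/4398046511104 * A ^ 14 + (-2248486414149363515 : ℝ)/140737488355328 * A ^ 16 + (-21590496836577947115 : ℝ)/1125899906842624 * A ^ 18 + (-113932485820610165979 : ℝ)/36028797018963968 * A ^ 20 + (66662196546203533683 : ℝ)/288230376151711744 * A ^ 22 + (123720315712470649666827 : ℝ)/9223372036854775808 * A ^ 24 + (821870283821735942146917 : ℝ)/73786976294838206464 * A ^ 26 + (-716276849605311652319655 : ℝ)/2361183241434822606848 * A ^ 28 + (70914480814629134865 : ℝ)/288230376151711744 * A ^ 30 + (-809697393193165809 : ℝ)/140737488355328 * A ^ 32 + (-21361169754081 : ℝ)/8589934592 * A ^ 34 + (4584266919 : ℝ)/8388608 * A ^ 36 + (-261855 : ℝ)/1024 * A ^ 38 + (1058 :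 ℝ) * A ^ 40) := by rw [hp]; ring
    have hPp : 0 < p A (((1 : ℝ) + (3 : ℝ)/8 * A ^ 2 + (-21 : ℝ)/256 * A ^ 4 + (165 : ℝ)/4096 * A ^ 6) + A ^ 8) := by
      rw [hplus]; exact mul_pos hA8pos hQp
    have hPm : p A (((1 : ℝ) + (3 : ℝ)/8 * A ^ 2 + (-21 : ℝ)/256 * A ^ 4 + (165 : ℝ)/4096 * A ^ 6) - A ^ 8) < 0 := by
      rw [hminus]; exact mul_neg_of_pos_of_neg hA8pos hQm
    have hA4' : A ^ 4 ≤ A ^ 2 / 100 := by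
      nlinarith only [mul_nonneg (sub_nonneg.mpr h2) hn2]
    have hA6' : A ^ 6 ≤ A ^ 2 / 10000 := by
      nlinarith only [mul_nonneg (sub_nonneg.mpr h4) hn2]
    have hA8' : A ^ 8 ≤ A ^ 2 / 1000000 := by
      nlinarith only [mul_nonneg (sub_nonneg.mpr h6) hn2]
    have hRm1 : (1:ℝ) ≤ ((1 : ℝ) + (3 : ℝ)/8 * A ^ 2 + (-21 : ℝ)/256 * A ^ 4 + (165 : ℝ)/4096 * A ^ 6) - A ^ 8 := by
      linarith only [hA4', hA8', hn2, hn6]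
    have hRppos : (0:ℝ) < ((1 : ℝ) + (3 : ℝ)/8 * A ^ 2 + (-21 : ℝ)/256 * A ^ 4 + (165 : ℝ)/4096 * A ^ 6) + A ^ 8 := by
      linarith only [hA4', hn2, hn6, hn8]
    have hwub : ω₂ A < ((1 : ℝ) + (3 : ℝ)/8 * A ^ 2 + (-21 : ℝ)/256 * A ^ 4 + (165 : ℝ)/4096 * A ^ 6) + A ^ 8 := by
      by_contra hcon
      push_neg at hcon
      rcases eq_or_lt_of_le hcon with heq | hlt
      · rw [heq, hwroot] at hPp
        exact lt_irrefl 0 hPp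
      · have hk := key A (((1 : ℝ) + (3 : ℝ)/8 * A ^ 2 + (-21 : ℝ)/256 * A ^ 4 + (165 : ℝ)/4096 * A ^ 6) + A ^ 8) (ω₂ A) hA hRppos hlt
        rw [hwroot] at hk
        linarith only [hk, mul_pos (pow_pos hwpos 4) hPp]
    have hwlb : ((1 : ℝ) + (3 : ℝ)/8 * A ^ 2 + (-21 : ℝ)/256 * A ^ 4 + (165 : ℝ)/4096 * A ^ 6) - A ^ 8 < ω₂ A := by
      by_contra hcon
      push_neg at hcon
      rcases eq_or_lt_of_le hcon with heq | hlt
      · rw [← heq, hwroot] at hPm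
        exact lt_irrefl 0 hPm
      · have hk := key A (ω₂ A) (((1 : ℝ) + (3 : ℝ)/8 * A ^ 2 + (-21 : ℝ)/256 * A ^ 4 + (165 : ℝ)/4096 * A ^ 6) - A ^ 8) hA hwpos hlt
        rw [hwroot] at hk
        linarith only [hk, mul_pos (pow_pos hwpos 4) (neg_pos.mpr hPm)]
    have hw1 : (1:ℝ) ≤ ω₂ A := le_of_lt (lt_of_le_of_lt hRm1 hwlb)
    have hQvlb : (0:ℝ) ≤ (1 : ℝ) + (-3 : ℝ)/8 * A ^ 2 + (57 : ℝ)/256 * A ^ 4 + (-633 : ℝ)/4096 * A ^ 6 := by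
      linarith only [hA4', hn2, hn4, hn6, hA6', h2]
    have hQvub : ((1 : ℝ) + (-3 : ℝ)/8 * A ^ 2 + (57 : ℝ)/256 * A ^ 4 + (-633 : ℝ)/4096 * A ^ 6) ≤ 2 := by
      linarith only [hA4', hn2, hn4, hn6, hA6', h2]
    have hHvlb : (-1:ℝ) ≤ (-5985 : ℝ)/65536 + (11349 : ℝ)/524288 * A ^ 2 + (-104445 : ℝ)/16777216 * A ^ 4 := by
      linarith only [hn2, hn4, h2, h4]
    have hHvub : ((-5985 : ℝ)/65536 + (11349 : ℝ)/524288 * A ^ 2 + (-104445 : ℝ)/16777216 * A ^ 4) ≤ 1 := by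
      linarith only [hn2, hn4, h2, h4]
    have haux1 : 0 ≤ (ω₂ A - (((1 : ℝ) + (3 : ℝ)/8 * A ^ 2 + (-21 : ℝ)/256 * A ^ 4 + (165 : ℝ)/4096 * A ^ 6) - A ^ 8)) * ((1 : ℝ) + (-3 : ℝ)/8 * A ^ 2 + (57 : ℝ)/256 * A ^ 4 + (-633 : ℝ)/4096 * A ^ 6) :=
      mul_nonneg (by linarith only [hwlb]) hQvlb
    have haux2 : 0 ≤ ((((1 : ℝ) + (3 : ℝ)/8 * A ^ 2 + (-21 : ℝ)/256 * A ^ 4 + (165 : ℝ)/4096 * A ^ 6) + A ^ 8) - ω₂ A) * ((1 : ℝ) + (-3 : ℝ)/8 * A ^ 2 + (57 : ℝ)/256 * A ^ 4 + (-633 : ℝ)/4096 * A ^ 6) :=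
      mul_nonneg (by linarith only [hwub]) hQvlb
    have haux3 : 0 ≤ A ^ 8 * (2 - ((1 : ℝ) + (-3 : ℝ)/8 * A ^ 2 + (57 : ℝ)/256 * A ^ 4 + (-633 : ℝ)/4096 * A ^ 6)) :=
      mul_nonneg hA8pos.le (by linarith only [hQvub])
    have haux4 : 0 ≤ A ^ 8 * (1 + ((-5985 : ℝ)/65536 + (11349 : ℝ)/524288 * A ^ 2 + (-104445 : ℝ)/16777216 * A ^ 4)) :=
      mul_nonneg hA8pos.le (by linarith only [hHvlb])
    have haux5 : 0 ≤ A ^ 8 * (1 - ((-5985 : ℝ)/65536 + (11349 : ℝ)/524288 * A ^ 2 + (-104445 : ℝ)/16777216 * A ^ 4)) :=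
      mul_nonneg hA8pos.le (by linarith only [hHvub])
    have hub : 1 - ((1 : ℝ) + (-3 : ℝ)/8 * A ^ 2 + (57 : ℝ)/256 * A ^ 4 + (-633 : ℝ)/4096 * A ^ 6) * ω₂ A ≤ 3 * A ^ 8 := by
      linarith only [haux1, haux3, haux4]
    have hlb : -(3 * A ^ 8) ≤ 1 - ((1 : ℝ) + (-3 : ℝ)/8 * A ^ 2 + (57 : ℝ)/256 * A ^ 4 + (-633 : ℝ)/4096 * A ^ 6) * ω₂ A := by
      linarith only [haux2, haux3, haux5]
    have habs : |1 - ((1 : ℝ) + (-3 : ℝ)/8 * A ^ 2 + (57 : ℝ)/256 * A ^ 4 + (-633 : ℝ)/4096 * A ^ 6) * ω₂ A| ≤ 3 * A ^ 8 := abs_le.mpr ⟨hlb, hub⟩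
    have e : T₂ A - (2 * π - (3 / 4) * π * A ^ 2 + (57 / 128) * π * A ^ 4
        - (633 / 2048) * π * A ^ 6)
        = 2 * π * (1 - ((1 : ℝ) + (-3 : ℝ)/8 * A ^ 2 + (57 : ℝ)/256 * A ^ 4 + (-633 : ℝ)/4096 * A ^ 6) * ω₂ A) / ω₂ A := by
      rw [hT₂]
      field_simp
      ring
    rw [e, abs_div, abs_of_pos hwpos, div_le_iff₀ hwpos, abs_mul,
      abs_of_pos (by positivity : (0:ℝ) < 2 * π)]
    have hs0 : 0 ≤ |1 - ((1 : ℝ) + (-3 : ℝ)/8 * A ^ 2 + (57 : ℝ)/256 * A ^ 4 + (-633 : ℝ)/4096 * A ^ 6) * ω₂ A| := abs_nonneg _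
    have hpi : π ≤ 4 := pi_le_four
    linarith only [mul_le_mul_of_nonneg_right hpi hs0,
      mul_le_mul_of_nonneg_left habs (by norm_num : (0:ℝ) ≤ 8),
      mul_nonneg (sub_nonneg.mpr hw1) hA8pos.le, habs, hs0]
end

section
/- Let k ≥ 0 and F(x) = x²/2 + k x⁴/4 + x⁶/6. Then the period function T(A) = 2√2 ∫₀^A dx/√(F(A) − F(x)) of the system ẋ = −y, ẏ = x + kx³ + x⁵ is strictly decreasing on (0, ∞). -/
open Real Set

/-- The rescaled potential: `F A - F (s*A) = A^2 * psi k A s`. -/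
noncomputable def psi (k A s : ℝ) : ℝ :=
  (1 - s ^ 2) / 2 + k * A ^ 2 * (1 - s ^ 4) / 4 + A ^ 4 * (1 - s ^ 6) / 6

lemma psi_pos {k A s : ℝ} (hk : 0 ≤ k) (hs0 : 0 ≤ s) (hs1 : s < 1) :
    0 < psi k A s := by
  have h2 : s ^ 2 < 1 := pow_lt_one₀ hs0 hs1 two_ne_zero
  have h4 : s ^ 4 ≤ 1 := pow_le_one₀ hs0 hs1.le
  have h6 : s ^ 6 ≤ 1 := pow_le_one₀ hs0 hs1.le
  have hA2 : (0:ℝ) ≤ A ^ 2 := sq_nonneg A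
  have hA4 : (0:ℝ) ≤ A ^ 4 := by positivity
  unfold psi
  have := mul_nonneg (mul_nonneg hk hA2) (by linarith : (0:ℝ) ≤ 1 - s ^ 4)
  have := mul_nonneg hA4 (by linarith : (0:ℝ) ≤ 1 - s ^ 6)
  nlinarith

lemma psi_one (k A : ℝ) : psi k A 1 = 0 := by unfold psi; ring

lemma psi_strictMono {k A B s : ℝ} (hk : 0 ≤ k) (hA : 0 < A) (hAB : A < B)
    (hs0 : 0 ≤ s) (hs1 : s < 1) : psi k A s < psi k B s := by
  have h4 : s ^ 4 ≤ 1 := pow_le_one₀ hs0 hs1.le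
  have h6 : s ^ 6 < 1 := pow_lt_one₀ hs0 hs1 (by norm_num)
  have hA2B2 : A ^ 2 ≤ B ^ 2 := by nlinarith
  have hA4B4 : A ^ 4 < B ^ 4 := pow_lt_pow_left₀ hAB hA.le (by norm_num)
  unfold psi
  have h1 : k * A ^ 2 * (1 - s ^ 4) / 4 ≤ k * B ^ 2 * (1 - s ^ 4) / 4 := by
    have h0 : (0:ℝ) ≤ 1 - s ^ 4 := by linarith
    have := mul_le_mul_of_nonneg_right (mul_le_mul_of_nonneg_left hA2B2 hk) h0
    linarith
  have h2 : A ^ 4 * (1 - s ^ 6) / 6 < B ^ 4 * (1 - s ^ 6) / 6 := by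
    have hpos : (0:ℝ) < 1 - s ^ 6 := by linarith
    have := mul_lt_mul_of_pos_right hA4B4 hpos
    linarith
  linarith

/-- The rescaled integrand is interval integrable on `[0,1]`. -/
lemma g_intervalIntegrable (k A : ℝ) (hk : 0 ≤ k) :
    IntervalIntegrable (fun s => 1 / Real.sqrt (psi k A s)) MeasureTheory.volume 0 1 := by
  have hdom : IntervalIntegrable
      (fun s : ℝ => Real.sqrt 2 * (1 - s) ^ (-(1/2) : ℝ)) MeasureTheory.volume 0 1 := by
    have h1 : IntervalIntegrable (fun x : ℝ => x ^ (-(1/2) : ℝ))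
        MeasureTheory.volume 0 1 := intervalIntegral.intervalIntegrable_rpow' (by norm_num)
    have h2 := (h1.comp_sub_left 1)
    simp only [sub_zero, sub_self] at h2
    exact h2.symm.const_mul (Real.sqrt 2)
  apply hdom.mono_fun
  · apply Measurable.aestronglyMeasurable
    apply Measurable.div measurable_const
    have : Continuous (fun s => psi k A s) := by unfold psi; continuity
    exact (Real.continuous_sqrt.comp this).measurable
  · filter_upwards [MeasureTheory.ae_restrict_mem measurableSet_uIoc] with s hs
    rw [Set.uIoc_of_le (by norm_num : (0:ℝ) ≤ 1)] at hs
    obtain ⟨hs0, hs1⟩ := hs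
    have hs0' : (0:ℝ) ≤ s := hs0.le
    have hψ : (1 - s) / 2 ≤ psi k A s := by
      have h2 : s ^ 2 ≤ 1 := pow_le_one₀ hs0' hs1
      have h4 : s ^ 4 ≤ 1 := pow_le_one₀ hs0' hs1
      have h6 : s ^ 6 ≤ 1 := pow_le_one₀ hs0' hs1
      have hA2 : (0:ℝ) ≤ A ^ 2 := sq_nonneg A
      have hA4 : (0:ℝ) ≤ A ^ 4 := by positivity
      unfold psi
      have := mul_nonneg (mul_nonneg hk hA2) (by linarith : (0:ℝ) ≤ 1 - s ^ 4)
      have := mul_nonneg hA4 (by linarith : (0:ℝ) ≤ 1 - s ^ 6)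
      nlinarith
    have hg_nonneg : (0:ℝ) ≤ 1 / Real.sqrt (psi k A s) := by positivity
    have hrw : (1 - s) ^ (-(1/2) : ℝ) = 1 / Real.sqrt (1 - s) := by
      rw [Real.rpow_neg (by linarith), Real.sqrt_eq_rpow, one_div]
      norm_num
    simp only [Real.norm_eq_abs, abs_of_nonneg hg_nonneg]
    rw [hrw, abs_of_nonneg (by positivity : (0:ℝ) ≤ Real.sqrt 2 * (1 / Real.sqrt (1 - s)))]
    rcases eq_or_lt_of_le hs1 with h | h
    · subst h
      simp [psi_one]
    · have hhalf : (0:ℝ) < (1 - s) / 2 := by linarith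
      have hle : Real.sqrt ((1 - s) / 2) ≤ Real.sqrt (psi k A s) := Real.sqrt_le_sqrt hψ
      have h1pos : (0:ℝ) < Real.sqrt ((1 - s) / 2) := Real.sqrt_pos.mpr hhalf
      have hstep : 1 / Real.sqrt (psi k A s) ≤ 1 / Real.sqrt ((1 - s) / 2) :=
        one_div_le_one_div_of_le h1pos hle
      have hcalc : 1 / Real.sqrt ((1 - s) / 2)
          = Real.sqrt 2 * (1 / Real.sqrt (1 - s)) := by
        rw [Real.sqrt_div (by linarith : (0:ℝ) ≤ 1 - s)]
        have ha : Real.sqrt 2 ≠ 0 := by positivity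
        have hb : Real.sqrt (1 - s) ≠ 0 := ne_of_gt (Real.sqrt_pos.mpr (by linarith))
        field_simp
      rw [hcalc] at hstep
      exact hstep

/-- For `k ≥ 0` and the potential `F(x) = x²/2 + kx⁴/4 + x⁶/6`, the period function
`T(A) = 2√2 ∫₀^A dx/√(F(A) − F(x))` of `ẋ = −y, ẏ = x + kx³ + x⁵` is strictly
decreasing on `(0, ∞)`. -/
theorem quintic_period_strictAnti (k : ℝ) (hk : 0 ≤ k)
    (F T : ℝ → ℝ)
    (hF : ∀ x : ℝ, F x = x ^ 2 / 2 + k * x ^ 4 / 4 + x ^ 6 / 6)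
    (hT : ∀ A : ℝ, T A = 2 * Real.sqrt 2 * ∫ x in (0:ℝ)..A, 1 / Real.sqrt (F A - F x)) :
    StrictAntiOn T (Set.Ioi (0 : ℝ)) := by
  -- Step 1: rescaling.
  have key : ∀ C : ℝ, 0 < C →
      T C = 2 * Real.sqrt 2 * ∫ s in (0:ℝ)..1, 1 / Real.sqrt (psi k C s) := by
    intro C hC
    rw [hT C]
    congr 1
    have hsub := intervalIntegral.smul_integral_comp_mul_right
      (a := 0) (b := 1) (fun x => 1 / Real.sqrt (F C - F x)) C
    simp only [zero_mul, one_mul, smul_eq_mul] at hsub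
    rw [← hsub]
    have hcong : (∫ s in (0:ℝ)..1, 1 / Real.sqrt (F C - F (s * C)))
        = ∫ s in (0:ℝ)..1, C⁻¹ * (1 / Real.sqrt (psi k C s)) := by
      apply intervalIntegral.integral_congr
      intro s _
      have halg : F C - F (s * C) = C ^ 2 * psi k C s := by
        rw [hF, hF]; unfold psi; ring
      have hsqrt : Real.sqrt (F C - F (s * C)) = C * Real.sqrt (psi k C s) := by
        rw [halg, Real.sqrt_mul (sq_nonneg C), Real.sqrt_sq hC.le]
      simp only [hsqrt]
      rw [one_div, mul_inv, one_div]
    rw [hcong, intervalIntegral.integral_const_mul, ← mul_assoc,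
      mul_inv_cancel₀ (ne_of_gt hC), one_mul]
  -- Step 2: strict monotonicity of the rescaled integral.
  intro A hA B hB hAB
  simp only [Set.mem_Ioi] at hA hB
  rw [key A hA, key B hB]
  have hIA := g_intervalIntegrable k A hk
  have hIB := g_intervalIntegrable k B hk
  have hlt : (∫ s in (0:ℝ)..1, 1 / Real.sqrt (psi k B s))
      < ∫ s in (0:ℝ)..1, 1 / Real.sqrt (psi k A s) := by
    have hdiffpos : 0 < ∫ s in (0:ℝ)..1,
        (1 / Real.sqrt (psi k A s) - 1 / Real.sqrt (psi k B s)) := by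
      rw [intervalIntegral.integral_of_le (zero_le_one)]
      have hnonneg : 0 ≤ᵐ[MeasureTheory.volume.restrict (Set.Ioc (0:ℝ) 1)]
          fun s => 1 / Real.sqrt (psi k A s) - 1 / Real.sqrt (psi k B s) := by
        filter_upwards [MeasureTheory.ae_restrict_mem measurableSet_Ioc] with s hs
        obtain ⟨hs0, hs1⟩ := hs
        rcases eq_or_lt_of_le hs1 with h | h
        · subst h
          simp [psi_one]
        · have h1 : 0 < psi k A s := psi_pos hk hs0.le h
          have h2 : psi k A s < psi k B s := psi_strictMono hk hA hAB hs0.le h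
          have := one_div_lt_one_div_of_lt (Real.sqrt_pos.mpr h1)
            (Real.sqrt_lt_sqrt h1.le h2)
          simp only [Pi.zero_apply]
          linarith
      have hint : MeasureTheory.IntegrableOn
          (fun s => 1 / Real.sqrt (psi k A s) - 1 / Real.sqrt (psi k B s))
          (Set.Ioc (0:ℝ) 1) MeasureTheory.volume := by
        have := (hIA.sub hIB).def'
        rwa [Set.uIoc_of_le (zero_le_one)] at this
      rw [MeasureTheory.setIntegral_pos_iff_support_of_nonneg_ae hnonneg hint]
      have hsub2 : Set.Ioo (0:ℝ) 1 ⊆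
          Function.support (fun s => 1 / Real.sqrt (psi k A s) - 1 / Real.sqrt (psi k B s))
          ∩ Set.Ioc (0:ℝ) 1 := by
        intro s hs
        obtain ⟨hs0, hs1⟩ := hs
        constructor
        · have h1 : 0 < psi k A s := psi_pos hk hs0.le hs1
          have h2 : psi k A s < psi k B s := psi_strictMono hk hA hAB hs0.le hs1
          have := one_div_lt_one_div_of_lt (Real.sqrt_pos.mpr h1)
            (Real.sqrt_lt_sqrt h1.le h2)
          simp only [Function.mem_support]
          intro hcontra
          nlinarith
        · exact ⟨hs0, hs1.le⟩
      calc (0:ENNReal) < MeasureTheory.volume (Set.Ioo (0:ℝ) 1) := by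
            simp [Real.volume_Ioo]
        _ ≤ _ := MeasureTheory.measure_mono hsub2
    have hsplit := intervalIntegral.integral_sub hIA hIB
    rw [hsplit] at hdiffpos
    linarith
  have hc : (0:ℝ) < 2 * Real.sqrt 2 := by positivity
  exact mul_lt_mul_of_pos_left hlt hc
end
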